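/- arXiv:1704.00708 — 3 statements merged into one kernel-verified Lean document; each statement's English description precedes it below -/
import Mathlib

section
/- Let A ∈ ℝ^{d1×d2}, S* ∈ ℝ^{d1×d2} with ‖S*‖_∞ ≤ τ, S ∈ ℝ^{d1×d2} with ‖S‖_∞ ≤ τ, and suppose both S and S* have at most β·d2 nonzero entries per row and β·d1 per column. Let M* ∈ ℝ^{d1×d2} be a rank-r matrix whose left singular vector matrix X* satisfies max_i ‖e_i^T X*‖² ≤ μr/d1, with largest singular value σ1 and smallest nonzero singular value σr, and τ = 2μrσ1/√(d1d2). If X D Y^T is the top-r SVD of M* + S* − S, then ‖S* − S‖ ≤ 4βμrσ1 ≤ 0.1σr implies σ_r(D) ≥ 0.9σr and ‖D‖ ≤ 1.1σ1, and consequently for every i: ‖e_i^T X‖ ≤ 1.2·√(μr/d1)·σ1·‖D‖/σ_r(D)² ≤ 2√(μr/d1)·(σ1/σr)². -/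
open Matrix BigOperators
open scoped Classical

noncomputable section

/-- Spectral (ℓ2 operator) norm of a real matrix. -/
def specNorm {m n : Type*} [Fintype m] [Fintype n] [DecidableEq n] (A : Matrix m n ℝ) : ℝ :=
  ‖LinearMap.toContinuousLinearMap (Matrix.toEuclideanLin A)‖

namespace RPCAaux

/-- Euclidean norm of a plain vector. -/
def en {n : ℕ} (v : Fin n → ℝ) : ℝ := Real.sqrt (∑ i, v i ^ 2)

lemma en_eq_norm {n : ℕ} (v : Fin n → ℝ) :
    en v = ‖(WithLp.equiv 2 (Fin n → ℝ)).symm v‖ := by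
  rw [EuclideanSpace.norm_eq]
  simp [en, Real.norm_eq_abs, sq_abs]

lemma en_nonneg {n : ℕ} (v : Fin n → ℝ) : 0 ≤ en v := Real.sqrt_nonneg _

lemma sq_en {n : ℕ} (v : Fin n → ℝ) : en v ^ 2 = ∑ i, v i ^ 2 := by
  rw [en, Real.sq_sqrt]; positivity

lemma en_add_le {n : ℕ} (v w : Fin n → ℝ) : en (v + w) ≤ en v + en w := by
  rw [en_eq_norm, en_eq_norm, en_eq_norm]
  have h : (WithLp.equiv 2 (Fin n → ℝ)).symm (v + w)
      = (WithLp.equiv 2 (Fin n → ℝ)).symm v + (WithLp.equiv 2 (Fin n → ℝ)).symm w := rfl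
  rw [h]; exact norm_add_le _ _

lemma en_neg {n : ℕ} (v : Fin n → ℝ) : en (-v) = en v := by
  simp [en]

lemma en_sub_le {n : ℕ} (v w : Fin n → ℝ) : en v - en w ≤ en (v + w) := by
  have h := en_add_le (v + w) (-w)
  have h2 : v + w + -w = v := by abel
  rw [h2, en_neg] at h
  linarith

lemma en_mulVec_le {m n : ℕ} (B : Matrix (Fin m) (Fin n) ℝ) (v : Fin n → ℝ) :
    en (B.mulVec v) ≤ specNorm B * en v := by
  rw [en_eq_norm, en_eq_norm]
  have h := (LinearMap.toContinuousLinearMap (Matrix.toEuclideanLin B)).le_opNorm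
    ((WithLp.equiv 2 (Fin n → ℝ)).symm v)
  simpa [Matrix.toEuclideanLin_apply_piLp_toLp, Matrix.toLin'_apply, specNorm] using h

lemma sumsq_eq_dot {n : ℕ} (v : Fin n → ℝ) : ∑ i, v i ^ 2 = v ⬝ᵥ v := by
  simp [dotProduct, sq]

lemma orth_mulVec_sumsq {m r : ℕ} (Y : Matrix (Fin m) (Fin r) ℝ) (hY : Yᵀ * Y = 1)
    (w : Fin r → ℝ) : ∑ i, (Y.mulVec w i) ^ 2 = ∑ k, w k ^ 2 := by
  rw [sumsq_eq_dot, sumsq_eq_dot]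
  calc Y.mulVec w ⬝ᵥ Y.mulVec w = (Y.mulVec w ᵥ* Y) ⬝ᵥ w := (dotProduct_mulVec _ _ _)
    _ = ((Yᵀ * Y).mulVec w) ⬝ᵥ w := by rw [← Matrix.mulVec_transpose, Matrix.mulVec_mulVec]
    _ = w ⬝ᵥ w := by rw [hY, Matrix.one_mulVec]

lemma cs {n : ℕ} (v w : Fin n → ℝ) :
    v ⬝ᵥ w ≤ Real.sqrt (∑ i, v i ^ 2) * Real.sqrt (∑ i, w i ^ 2) := by
  have h := Finset.sum_mul_sq_le_sq_mul_sq Finset.univ v w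
  have h2 : Real.sqrt ((∑ i, v i * w i)^2) ≤
      Real.sqrt ((∑ i, v i ^ 2) * ∑ i, w i ^ 2) := Real.sqrt_le_sqrt h
  rw [Real.sqrt_mul (by positivity : (0:ℝ) ≤ ∑ i, v i ^2)] at h2
  calc v ⬝ᵥ w = ∑ i, v i * w i := rfl
    _ ≤ |∑ i, v i * w i| := le_abs_self _
    _ = Real.sqrt ((∑ i, v i * w i)^2) := (Real.sqrt_sq_eq_abs _).symm
    _ ≤ _ := h2

lemma bessel {m r : ℕ} (Y : Matrix (Fin m) (Fin r) ℝ) (hY : Yᵀ * Y = 1)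
    (v : Fin m → ℝ) : ∑ k, (Yᵀ.mulVec v k) ^ 2 ≤ ∑ j, v j ^ 2 := by
  set w := Yᵀ.mulVec v with hw
  have key : ∑ k, w k ^ 2 = v ⬝ᵥ Y.mulVec w := by
    rw [sumsq_eq_dot]
    calc w ⬝ᵥ w = w ⬝ᵥ Yᵀ.mulVec v := by rw [← hw]
      _ = (w ᵥ* Yᵀ) ⬝ᵥ v := dotProduct_mulVec _ _ _
      _ = (Y.mulVec w) ⬝ᵥ v := by rw [Matrix.vecMul_transpose]
      _ = v ⬝ᵥ Y.mulVec w := dotProduct_comm _ _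
  have hYw : ∑ j, (Y.mulVec w j) ^ 2 = ∑ k, w k ^ 2 := orth_mulVec_sumsq Y hY w
  have hcs := cs v (Y.mulVec w)
  rw [hYw] at hcs
  have key2 : ∑ k, w k ^ 2 ≤ Real.sqrt (∑ j, v j ^ 2) * Real.sqrt (∑ k, w k ^ 2) :=
    calc ∑ k, w k ^ 2 = v ⬝ᵥ Y.mulVec w := key
      _ ≤ _ := hcs
  by_cases hz : ∑ k, w k ^ 2 = 0
  · rw [hz]; positivity
  · have hpos : 0 < ∑ k, w k ^ 2 := lt_of_le_of_ne (by positivity) (Ne.symm hz)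
    have h1 : Real.sqrt (∑ k, w k ^2) > 0 := Real.sqrt_pos.mpr hpos
    have h2 : (Real.sqrt (∑ k, w k ^2))^2 = ∑ k, w k ^ 2 := Real.sq_sqrt (le_of_lt hpos)
    have h3 : (Real.sqrt (∑ j, v j ^2))^2 = ∑ j, v j ^ 2 := Real.sq_sqrt (by positivity)
    nlinarith [h1, h2, h3, key2]



lemma en_le_en {n m : ℕ} {v : Fin n → ℝ} {w : Fin m → ℝ}
    (h : ∑ i, v i ^ 2 ≤ ∑ i, w i ^ 2) : en v ≤ en w := Real.sqrt_le_sqrt h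

lemma en_congr {n m : ℕ} {v : Fin n → ℝ} {w : Fin m → ℝ}
    (h : ∑ i, v i ^ 2 = ∑ i, w i ^ 2) : en v = en w := by rw [en, en, h]

lemma en_mulVec_orth {m r : ℕ} (Y : Matrix (Fin m) (Fin r) ℝ) (hY : Yᵀ * Y = 1)
    (w : Fin r → ℝ) : en (Y.mulVec w) = en w := en_congr (orth_mulVec_sumsq Y hY w)

lemma en_diagmul_le {r : ℕ} (d : Fin r → ℝ) (c : ℝ) (hc0 : 0 ≤ c)
    (hc : ∀ k, |d k| ≤ c) (u : Fin r → ℝ) :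
    en (fun k => d k * u k) ≤ c * en u := by
  have h : ∑ k, (d k * u k) ^ 2 ≤ c ^ 2 * ∑ k, u k ^ 2 := by
    rw [Finset.mul_sum]
    refine Finset.sum_le_sum fun k _ => ?_
    have h1 : (d k)^2 ≤ c^2 := by
      have := hc k; nlinarith [abs_nonneg (d k), sq_abs (d k)]
    nlinarith [sq_nonneg (u k)]
  calc en (fun k => d k * u k) ≤ Real.sqrt (c^2 * ∑ k, u k ^2) := Real.sqrt_le_sqrt h
    _ = c * en u := by
        rw [Real.sqrt_mul (sq_nonneg c), Real.sqrt_sq hc0, en]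

lemma en_diagmul_ge {r : ℕ} (d : Fin r → ℝ) (c : ℝ) (hc0 : 0 ≤ c)
    (hc : ∀ k, c ≤ |d k|) (u : Fin r → ℝ) :
    c * en u ≤ en (fun k => d k * u k) := by
  have h : c ^ 2 * ∑ k, u k ^ 2 ≤ ∑ k, (d k * u k) ^ 2 := by
    rw [Finset.mul_sum]
    refine Finset.sum_le_sum fun k _ => ?_
    have h1 : c^2 ≤ (d k)^2 := by
      have := hc k; nlinarith [abs_nonneg (d k), sq_abs (d k)]
    nlinarith [sq_nonneg (u k)]
  calc c * en u = Real.sqrt (c^2 * ∑ k, u k ^ 2) := by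
        rw [Real.sqrt_mul (sq_nonneg c), Real.sqrt_sq hc0, en]
    _ ≤ _ := Real.sqrt_le_sqrt h

lemma exists_ker {r : ℕ} (hr : 0 < r) (G : Matrix (Fin r) (Fin r) ℝ) (k : Fin r) :
    ∃ w : Fin r → ℝ, w ≠ 0 ∧ ∀ j, j ≠ k → G.mulVec w j = 0 := by
  let f : (Fin r → ℝ) →ₗ[ℝ] ({j : Fin r // j ≠ k} → ℝ) :=
    { toFun := fun w j => G.mulVec w j.1
      map_add' := fun a b => by funext j; simp [Matrix.mulVec_add]
      map_smul' := fun c a => by funext j; simp [Matrix.mulVec_smul] }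
  have hni : ¬ Function.Injective f := by
    intro hinj
    have h1 := LinearMap.finrank_le_finrank_of_injective hinj
    rw [Module.finrank_fintype_fun_eq_card, Module.finrank_fintype_fun_eq_card] at h1
    have h4 : Fintype.card {j : Fin r // j ≠ k} = r - 1 := by
      simp [Fintype.card_subtype_compl]
    rw [h4, Fintype.card_fin] at h1
    omega
  obtain ⟨a, b, hab, hne⟩ := Function.not_injective_iff.mp hni
  refine ⟨a - b, sub_ne_zero.mpr hne, fun j hj => ?_⟩
  have hz : f (a - b) = 0 := by rw [map_sub, hab, sub_self]
  have h := congrFun hz ⟨j, hj⟩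
  simpa [f] using h

lemma sumsq_pos {n : ℕ} {w : Fin n → ℝ} (hw : w ≠ 0) : 0 < ∑ k, w k ^ 2 := by
  rcases lt_or_eq_of_le (Finset.sum_nonneg fun k _ => sq_nonneg (w k)) with h | h
  · exact h
  · exfalso; apply hw; funext k
    have := (Finset.sum_eq_zero_iff_of_nonneg (fun k _ => sq_nonneg (w k))).mp h.symm
    have hk := this k (Finset.mem_univ k)
    exact pow_eq_zero_iff (by norm_num) |>.mp hk

end RPCAaux

open RPCAaux

set_option maxHeartbeats 2000000

/-- Incoherence of the top-`r` SVD of `M* + S* − S` for sparse bounded `S, S*`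
(robust PCA). With `M* = X* D* Y*ᵀ` a rank-`r` SVD, `X*` `μ`-incoherent, singular values
in `[σr, σ1]`, `S, S*` entrywise bounded by `τ = 2μrσ1/√(d1d2)` and `β`-sparse per
row/column, and `X D Yᵀ` the top-`r` SVD of `M* + S* − S`: if
`‖S* − S‖ ≤ 4βμrσ1 ≤ 0.1σr` then `σ_r(D) ≥ 0.9σr`, `‖D‖ ≤ 1.1σ1`, and every row of `X`
satisfies `‖e_iᵀX‖ ≤ 2√(μr/d1)(σ1/σr)²`. -/
theorem stmt15 {d1 d2 r : ℕ} (hd1 : 0 < d1) (hd2 : 0 < d2) (hr : 0 < r)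
    (β μ σ1 σr : ℝ) (hβ : 0 ≤ β) (hμ : 0 < μ) (hσr : 0 < σr) (hσ1 : σr ≤ σ1)
    -- rank-r SVD of M*, with incoherent left singular vectors
    (Xs : Matrix (Fin d1) (Fin r) ℝ) (Ys : Matrix (Fin d2) (Fin r) ℝ) (ds : Fin r → ℝ)
    (hXs : Xsᵀ * Xs = 1) (hYs : Ysᵀ * Ys = 1)
    (hds : ∀ k, σr ≤ ds k ∧ ds k ≤ σ1)
    (hinc : ∀ i : Fin d1, (∑ k, (Xs i k) ^ 2) ≤ μ * r / d1)
    -- sparse bounded perturbations S, S*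
    (S Sstar : Matrix (Fin d1) (Fin d2) ℝ)
    (hSτ : ∀ i j, |S i j| ≤ 2 * μ * r * σ1 / Real.sqrt (d1 * d2))
    (hSstarτ : ∀ i j, |Sstar i j| ≤ 2 * μ * r * σ1 / Real.sqrt (d1 * d2))
    (hSrow : ∀ i : Fin d1,
      ((Finset.univ.filter fun j : Fin d2 => S i j ≠ 0).card : ℝ) ≤ β * d2)
    (hScol : ∀ j : Fin d2,
      ((Finset.univ.filter fun i : Fin d1 => S i j ≠ 0).card : ℝ) ≤ β * d1)
    (hSstarRow : ∀ i : Fin d1,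
      ((Finset.univ.filter fun j : Fin d2 => Sstar i j ≠ 0).card : ℝ) ≤ β * d2)
    (hSstarCol : ∀ j : Fin d2,
      ((Finset.univ.filter fun i : Fin d1 => Sstar i j ≠ 0).card : ℝ) ≤ β * d1)
    -- top-r SVD of M* + S* − S
    (X : Matrix (Fin d1) (Fin r) ℝ) (Y : Matrix (Fin d2) (Fin r) ℝ) (dd : Fin r → ℝ)
    (E : Matrix (Fin d1) (Fin d2) ℝ)
    (hX : Xᵀ * X = 1) (hY : Yᵀ * Y = 1) (hdd : ∀ k, 0 ≤ dd k)
    (hdecomp : Xs * Matrix.diagonal ds * Ysᵀ + Sstar - S = X * Matrix.diagonal dd * Yᵀ + E)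
    (hXE : Xᵀ * E = 0) (hEY : E * Y = 0)
    (hEtail : ∀ k, specNorm E ≤ dd k)
    -- the antecedent of the implication
    (hSdiff : specNorm (Sstar - S) ≤ 4 * β * μ * r * σ1)
    (hsmall : 4 * β * μ * r * σ1 ≤ 0.1 * σr) :
    (∀ k, 0.9 * σr ≤ dd k ∧ dd k ≤ 1.1 * σ1) ∧
      (∀ i : Fin d1,
        Real.sqrt (∑ k, (X i k) ^ 2) ≤
          2 * Real.sqrt (μ * r / d1) * (σ1 / σr) ^ 2) := by
  have hσ1pos : 0 < σ1 := lt_of_lt_of_le hσr hσ1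
  obtain ⟨Ms, hMs⟩ : ∃ Ms, Ms = Xs * Matrix.diagonal ds * Ysᵀ := ⟨_, rfl⟩
  obtain ⟨A, hAdef⟩ : ∃ A, A = X * Matrix.diagonal dd * Yᵀ + E := ⟨_, rfl⟩
  have hA' : A = Ms + (Sstar - S) := by
    rw [hAdef, ← hdecomp, ← hMs, add_sub_assoc]
  -- column normalizations
  have hXcol : ∀ k, ∑ i, (X i k) ^ 2 = 1 := by
    intro k
    have h := congrFun (congrFun hX k) k
    simpa [Matrix.mul_apply, Matrix.one_apply, sq] using h
  have hYcol : ∀ k, ∑ j, (Y j k) ^ 2 = 1 := by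
    intro k
    have h := congrFun (congrFun hY k) k
    simpa [Matrix.mul_apply, Matrix.one_apply, sq] using h
  -- spectral bound for Ms (upper)
  have hMv_up : ∀ v : Fin d2 → ℝ, en (Ms.mulVec v) ≤ σ1 * en v := by
    intro v
    have hdv : (Matrix.diagonal ds).mulVec (Ysᵀ.mulVec v) = fun k => ds k * (Ysᵀ.mulVec v) k := by
      funext k; rw [Matrix.mulVec_diagonal]
    have h1 : Ms.mulVec v = Xs.mulVec (fun k => ds k * (Ysᵀ.mulVec v) k) := by
      rw [hMs, ← Matrix.mulVec_mulVec, ← Matrix.mulVec_mulVec, hdv]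
    rw [h1, en_mulVec_orth Xs hXs _]
    calc en (fun k => ds k * (Ysᵀ.mulVec v) k)
        ≤ σ1 * en (Ysᵀ.mulVec v) := by
          refine en_diagmul_le _ _ (le_of_lt hσ1pos) (fun k => ?_) _
          rcases hds k with ⟨h1, h2⟩
          rw [abs_of_nonneg (le_trans (le_of_lt hσr) h1)]; exact h2
      _ ≤ σ1 * en v := by
          refine mul_le_mul_of_nonneg_left (en_le_en (bessel Ys hYs v)) (le_of_lt hσ1pos)
  -- spectral bound for Sstar - S
  have hSSv : ∀ v : Fin d2 → ℝ, en ((Sstar - S).mulVec v) ≤ 0.1 * σr * en v := by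
    intro v
    refine (en_mulVec_le _ _).trans ?_
    exact mul_le_mul_of_nonneg_right (hSdiff.trans hsmall) (en_nonneg v)
  -- A * Y = X * diagonal dd
  have hAY : A * Y = X * Matrix.diagonal dd := by
    rw [hAdef, Matrix.add_mul, Matrix.mul_assoc (X * Matrix.diagonal dd) Yᵀ Y, hY,
      Matrix.mul_one, hEY, add_zero]
  have hAcol : ∀ k, A.mulVec (fun j => Y j k) = fun i => X i k * dd k := by
    intro k
    funext i
    have h1 : A.mulVec (fun j => Y j k) i = (A * Y) i k := by
      simp [Matrix.mulVec, Matrix.mul_apply, dotProduct]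
    rw [h1, hAY, Matrix.mul_diagonal]
  -- Part 1
  have part1 : ∀ k, 0.9 * σr ≤ dd k ∧ dd k ≤ 1.1 * σ1 := by
    intro k
    have hyk1 : en (fun j => Y j k) = 1 := by
      rw [en, hYcol k, Real.sqrt_one]
    constructor
    · -- lower bound
      obtain ⟨w, hw0, hwker⟩ := exists_ker hr (Yᵀ * Ys) k
      obtain ⟨v, hvdef⟩ : ∃ v : Fin d2 → ℝ, v = Ys.mulVec w := ⟨_, rfl⟩
      have hv2 : ∑ j, v j ^ 2 = ∑ k', w k' ^ 2 := by
        rw [hvdef]; exact orth_mulVec_sumsq Ys hYs w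
      have hwpos : 0 < ∑ k', w k' ^ 2 := sumsq_pos hw0
      have hvpos : 0 < ∑ j, v j ^ 2 := hv2 ▸ hwpos
      have henv : 0 < en v := Real.sqrt_pos.mpr hvpos
      obtain ⟨g, hgdef⟩ : ∃ g : Fin r → ℝ, g = Yᵀ.mulVec v := ⟨_, rfl⟩
      have hg : g = (Yᵀ * Ys).mulVec w := by
        rw [hgdef, hvdef, Matrix.mulVec_mulVec]
      have hgj : ∀ j, j ≠ k → g j = 0 := by intro j hj; rw [hg]; exact hwker j hj
      obtain ⟨c, hcdef⟩ : ∃ c : ℝ, c = g k := ⟨_, rfl⟩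
      -- lower bound on en (A v)
      have hMv_low : σr * en v ≤ en (Ms.mulVec v) := by
        have hdw : (Matrix.diagonal ds).mulVec w = fun k' => ds k' * w k' := by
          funext k'; rw [Matrix.mulVec_diagonal]
        have h1 : Ms.mulVec v = Xs.mulVec (fun k' => ds k' * w k') := by
          rw [hMs, ← Matrix.mulVec_mulVec, ← Matrix.mulVec_mulVec, hvdef,
            Matrix.mulVec_mulVec w Ysᵀ Ys, hYs, Matrix.one_mulVec, hdw]
        rw [h1, en_mulVec_orth Xs hXs _]
        have h2 : σr * en w ≤ en (fun k' => ds k' * w k') := by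
          refine en_diagmul_ge _ _ (le_of_lt hσr) (fun k' => ?_) _
          rcases hds k' with ⟨ha, _⟩
          rw [abs_of_nonneg (le_trans (le_of_lt hσr) ha)]; exact ha
        have h3 : en v = en w := en_congr hv2
        rw [h3]; exact h2
      have hAlow : 0.9 * σr * en v ≤ en (A.mulVec v) := by
        have h1 : A.mulVec v = Ms.mulVec v + (Sstar - S).mulVec v := by
          rw [hA', Matrix.add_mulVec]
        rw [h1]
        have h2 := en_sub_le (Ms.mulVec v) ((Sstar - S).mulVec v)
        have h3 := hSSv v
        linarith [hMv_low]
      -- upper bound on ∑ (A v)²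
      obtain ⟨u, hudef⟩ : ∃ u : Fin d2 → ℝ, u = v - c • (fun j => Y j k) := ⟨_, rfl⟩
      have hEyk : E.mulVec (fun j => Y j k) = 0 := by
        funext i
        have h1 : E.mulVec (fun j => Y j k) i = (E * Y) i k := by
          simp [Matrix.mulVec, Matrix.mul_apply, dotProduct]
        rw [h1, hEY]; rfl
      have hEv : E.mulVec v = E.mulVec u := by
        rw [hudef, Matrix.mulVec_sub, Matrix.mulVec_smul, hEyk]
        simp
      have hcsum : ∑ j, Y j k * v j = c := by
        rw [hcdef, hgdef]
        simp [Matrix.mulVec, dotProduct, Matrix.transpose_apply]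
      have hu2 : ∑ j, u j ^ 2 = ∑ j, v j ^ 2 - c ^ 2 := by
        have expand : ∀ j, u j ^ 2 = v j ^ 2 - 2 * c * (Y j k * v j) + c ^ 2 * (Y j k) ^ 2 := by
          intro j
          have : u j = v j - c * Y j k := by rw [hudef]; simp
          rw [this]; ring
        rw [Finset.sum_congr rfl (fun j _ => expand j)]
        rw [Finset.sum_add_distrib, Finset.sum_sub_distrib, ← Finset.mul_sum, ← Finset.mul_sum,
          hYcol k, hcsum]
        ring
      have hdg : (Matrix.diagonal dd).mulVec (Yᵀ.mulVec v) = fun j => dd j * g j := by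
        funext j; rw [Matrix.mulVec_diagonal, hgdef]
      have hXsum : X.mulVec (fun j => dd j * g j) = fun i => dd k * c * X i k := by
        funext i
        calc X.mulVec (fun j => dd j * g j) i = ∑ j, X i j * (dd j * g j) := rfl
          _ = X i k * (dd k * g k) := by
              refine Finset.sum_eq_single k (fun j _ hj => by rw [hgj j hj]; ring)
                (fun h => absurd (Finset.mem_univ k) h)
          _ = dd k * c * X i k := by rw [hcdef]; ring
      have hAv : A.mulVec v = fun i => dd k * c * X i k + E.mulVec u i := by
        rw [hAdef, Matrix.add_mulVec, hEv, ← Matrix.mulVec_mulVec, ← Matrix.mulVec_mulVec,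
          hdg, hXsum]
        rfl
      have hXEu : ∑ i, X i k * E.mulVec u i = 0 := by
        have h1 : (Xᵀ.mulVec (E.mulVec u)) k = 0 := by
          rw [Matrix.mulVec_mulVec, hXE, Matrix.zero_mulVec]; rfl
        rw [← h1]
        simp [Matrix.mulVec, dotProduct, Matrix.transpose_apply]
      have hEu2 : ∑ i, (E.mulVec u i) ^ 2 ≤ dd k ^ 2 * (∑ j, v j ^ 2 - c ^ 2) := by
        have h1 : en (E.mulVec u) ≤ dd k * en u :=
          (en_mulVec_le E u).trans
            (mul_le_mul_of_nonneg_right (hEtail k) (en_nonneg u))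
        have h2 : en (E.mulVec u) ^ 2 ≤ (dd k * en u) ^ 2 := by
          have := en_nonneg (E.mulVec u); nlinarith [en_nonneg u, hdd k]
        rw [sq_en, mul_pow, sq_en, hu2] at h2
        exact h2
      have hAv2 : ∑ i, (A.mulVec v i) ^ 2 ≤ dd k ^ 2 * ∑ j, v j ^ 2 := by
        rw [hAv]
        have expand : ∀ i, (dd k * c * X i k + E.mulVec u i) ^ 2
            = (dd k * c) ^ 2 * X i k ^ 2 + 2 * (dd k * c) * (X i k * E.mulVec u i)
              + (E.mulVec u i) ^ 2 := fun i => by ring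
        rw [Finset.sum_congr rfl (fun i _ => expand i), Finset.sum_add_distrib,
          Finset.sum_add_distrib, ← Finset.mul_sum, ← Finset.mul_sum, hXcol k, hXEu]
        have := hEu2
        nlinarith [sq_nonneg c, sq_nonneg (dd k)]
      -- combine
      have hAvsq : en (A.mulVec v) ^ 2 ≤ dd k ^ 2 * en v ^ 2 := by
        rw [sq_en, sq_en]; exact hAv2
      have hsq : (0.9 * σr) ^ 2 ≤ dd k ^ 2 := by
        have h1 : (0.9 * σr * en v) ^ 2 ≤ en (A.mulVec v) ^ 2 :=
          pow_le_pow_left₀ (by positivity) hAlow 2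
        nlinarith [hAvsq, henv, mul_pos henv henv]
      nlinarith [hsq, hσr, hdd k]
    · -- upper bound
      have h1 : en (fun i => X i k * dd k) = dd k := by
        rw [en]
        have h2 : ∑ i, (X i k * dd k) ^ 2 = dd k ^ 2 := by
          have : ∀ i, (X i k * dd k) ^ 2 = X i k ^ 2 * dd k ^ 2 := fun i => by ring
          rw [Finset.sum_congr rfl (fun i _ => this i), ← Finset.sum_mul, hXcol k, one_mul]
        rw [h2, Real.sqrt_sq (hdd k)]
      have h3 : en (A.mulVec (fun j => Y j k)) ≤ σ1 * 1 + 0.1 * σr * 1 := by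
        rw [hA', Matrix.add_mulVec]
        refine (en_add_le _ _).trans ?_
        have h4 := hMv_up (fun j => Y j k)
        have h5 := hSSv (fun j => Y j k)
        rw [hyk1] at h4 h5
        linarith
      rw [hAcol k, h1] at h3
      linarith
  refine ⟨part1, ?_⟩
  -- Part 2
  intro i
  obtain ⟨s, hsdef⟩ : ∃ s : ℝ, s = Real.sqrt (μ * r / d1) := ⟨_, rfl⟩
  obtain ⟨t, htdef⟩ : ∃ t : ℝ, t = Real.sqrt (β * μ * r) := ⟨_, rfl⟩
  have hs0 : 0 ≤ s := by rw [hsdef]; exact Real.sqrt_nonneg _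
  have ht0 : 0 ≤ t := by rw [htdef]; exact Real.sqrt_nonneg _
  obtain ⟨a, hadef⟩ : ∃ a : Fin d2 → ℝ, a = A i := ⟨_, rfl⟩
  have haY : ∀ k', (Yᵀ.mulVec a) k' = X i k' * dd k' := by
    intro k'
    have h1 : (Yᵀ.mulVec a) k' = (A * Y) i k' := by
      rw [hadef]
      simp [Matrix.mulVec, dotProduct, Matrix.mul_apply, Matrix.transpose_apply, mul_comm]
    rw [h1, hAY, Matrix.mul_diagonal]
  have hbess := bessel Y hY a
  rw [Finset.sum_congr rfl (fun k' _ => by rw [haY k'])] at hbess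
  have hXrow : (0.9 * σr) ^ 2 * ∑ k', X i k' ^ 2 ≤ ∑ j, a j ^ 2 := by
    refine le_trans ?_ hbess
    rw [Finset.mul_sum]
    refine Finset.sum_le_sum fun k' _ => ?_
    have h1 := (part1 k').1
    have h2 : (0.9 * σr) ^ 2 ≤ dd k' ^ 2 := by nlinarith [hσr, hdd k']
    have : (X i k' * dd k') ^ 2 = dd k' ^ 2 * X i k' ^ 2 := by ring
    rw [this]
    exact mul_le_mul_of_nonneg_right h2 (sq_nonneg _)
  -- triangle bound on en a
  have hd1' : (0:ℝ) < d1 := by exact_mod_cast hd1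
  have hd2' : (0:ℝ) < d2 := by exact_mod_cast hd2
  have hms : en (fun j => Ms i j) ≤ σ1 * s := by
    have h1 : (fun j => Ms i j) = Ys.mulVec (fun k' => ds k' * Xs i k') := by
      funext j
      rw [hMs]
      rw [show (Xs * Matrix.diagonal ds * Ysᵀ) i j
          = ∑ x, (Xs * Matrix.diagonal ds) i x * Ys j x from by rw [Matrix.mul_apply]; rfl]
      rw [show Ys.mulVec (fun k' => ds k' * Xs i k') j
          = ∑ x, Ys j x * (ds x * Xs i x) from rfl]
      refine Finset.sum_congr rfl fun x _ => ?_
      rw [Matrix.mul_diagonal]; ring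
    rw [h1, en_mulVec_orth Ys hYs _]
    have h2 : en (fun k' => ds k' * Xs i k') ≤ σ1 * en (fun k' => Xs i k') := by
      refine en_diagmul_le _ _ hσ1pos.le (fun k' => ?_) _
      rcases hds k' with ⟨ha, hb⟩
      rw [abs_of_nonneg (hσr.le.trans ha)]; exact hb
    refine h2.trans (mul_le_mul_of_nonneg_left ?_ hσ1pos.le)
    rw [hsdef, en]
    exact Real.sqrt_le_sqrt (hinc i)
  have hsparse : ∀ T : Matrix (Fin d1) (Fin d2) ℝ,
      (∀ i' j, |T i' j| ≤ 2 * μ * r * σ1 / Real.sqrt (d1 * d2)) →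
      (((Finset.univ.filter fun j : Fin d2 => T i j ≠ 0).card : ℝ) ≤ β * d2) →
      en (fun j => T i j) ≤ 2 * σ1 * t * s := by
    intro T hτ hcard
    have hsum : ∑ j, (T i j) ^ 2
        ≤ β * d2 * (2 * μ * r * σ1 / Real.sqrt (d1 * d2)) ^ 2 := by
      have h1 : ∑ j, (T i j) ^ 2
          = ∑ j ∈ Finset.univ.filter (fun j => T i j ≠ 0), (T i j) ^ 2 := by
        symm
        refine Finset.sum_filter_of_ne fun x _ hx => ?_
        intro hz; exact hx (by rw [hz]; ring)
      rw [h1]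
      calc ∑ j ∈ Finset.univ.filter (fun j => T i j ≠ 0), (T i j) ^ 2
          ≤ ∑ _j ∈ Finset.univ.filter (fun j => T i j ≠ 0),
              (2 * μ * r * σ1 / Real.sqrt (d1 * d2)) ^ 2 := by
            refine Finset.sum_le_sum fun j _ => ?_
            have h2 := hτ i j
            nlinarith [abs_nonneg (T i j), sq_abs (T i j)]
        _ = ((Finset.univ.filter fun j => T i j ≠ 0).card : ℝ)
              * (2 * μ * r * σ1 / Real.sqrt (d1 * d2)) ^ 2 := by
            rw [Finset.sum_const, nsmul_eq_mul]
        _ ≤ β * d2 * (2 * μ * r * σ1 / Real.sqrt (d1 * d2)) ^ 2 :=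
            mul_le_mul_of_nonneg_right hcard (sq_nonneg _)
    have hen : en (fun j => T i j)
        ≤ Real.sqrt (β * d2 * (2 * μ * r * σ1 / Real.sqrt (d1 * d2)) ^ 2) :=
      Real.sqrt_le_sqrt hsum
    refine hen.trans ?_
    have heq : β * d2 * (2 * μ * r * σ1 / Real.sqrt (d1 * d2)) ^ 2
        = (2 * σ1 * t * s) ^ 2 := by
      have h1 : t ^ 2 = β * μ * r := by
        rw [htdef]; exact Real.sq_sqrt (by positivity)
      have h2 : s ^ 2 = μ * r / d1 := by
        rw [hsdef]; exact Real.sq_sqrt (by positivity)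
      rw [div_pow, Real.sq_sqrt (by positivity : (0:ℝ) ≤ (d1:ℝ) * (d2:ℝ))]
      rw [show (2 * σ1 * t * s) ^ 2 = 4 * σ1 ^ 2 * t ^ 2 * s ^ 2 from by ring, h1, h2]
      field_simp
      ring
    rw [heq, Real.sqrt_sq (by positivity)]
  have hSme : en (fun j => S i j) ≤ 2 * σ1 * t * s := hsparse S hSτ (hSrow i)
  have hSsme : en (fun j => Sstar i j) ≤ 2 * σ1 * t * s := hsparse Sstar hSstarτ (hSstarRow i)
  have htri : en a ≤ σ1 * s + (2 * σ1 * t * s + 2 * σ1 * t * s) := by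
    have hdecompa : a = (fun j => Ms i j) + ((fun j => Sstar i j) + fun j => -(S i j)) := by
      funext j
      have h0 := congrFun (congrFun hA' i) j
      simp only [Matrix.add_apply, Matrix.sub_apply] at h0
      rw [hadef]
      show A i j = Ms i j + (Sstar i j + -(S i j))
      rw [h0]; ring
    have h2 := en_add_le (fun j => Ms i j) ((fun j => Sstar i j) + fun j => -(S i j))
    have h3 := en_add_le (fun j => Sstar i j) (fun j => -(S i j))
    have h4 : en (fun j => -(S i j)) = en (fun j => S i j) := by
      rw [show (fun j => -(S i j)) = -(fun j => S i j) from rfl, en_neg]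
    rw [← hdecompa] at h2
    rw [h4] at h3
    linarith
  have ht02 : t ≤ 0.2 := by
    have h40 : β * μ * r ≤ 0.025 := by nlinarith [hsmall, hσ1pos, hσ1]
    rw [htdef]
    have h5 : Real.sqrt (β * μ * r) ≤ Real.sqrt 0.04 := Real.sqrt_le_sqrt (by linarith)
    rw [show (0.04:ℝ) = 0.2 ^ 2 by norm_num, Real.sqrt_sq (by norm_num)] at h5
    exact h5
  have hena : en a ≤ 1.8 * σ1 * s := by
    nlinarith [htri, ht02, hs0, hσ1pos, ht0, mul_nonneg hσ1pos.le hs0]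
  have hQ : Real.sqrt (∑ k', X i k' ^ 2) * (0.9 * σr) ≤ 1.8 * σ1 * s := by
    have hQ0 : (0:ℝ) ≤ ∑ k', X i k' ^ 2 := by positivity
    have h2 : ∑ j, a j ^ 2 ≤ (1.8 * σ1 * s) ^ 2 := by
      have h3 := pow_le_pow_left₀ (en_nonneg a) hena 2
      rw [sq_en] at h3; exact h3
    have h1 : (∑ k', X i k' ^ 2) * (0.9 * σr) ^ 2 ≤ (1.8 * σ1 * s) ^ 2 := by
      nlinarith [hXrow]
    calc Real.sqrt (∑ k', X i k' ^ 2) * (0.9 * σr)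
        = Real.sqrt ((∑ k', X i k' ^ 2) * (0.9 * σr) ^ 2) := by
          rw [Real.sqrt_mul hQ0, Real.sqrt_sq (by positivity)]
      _ ≤ Real.sqrt ((1.8 * σ1 * s) ^ 2) := Real.sqrt_le_sqrt h1
      _ = 1.8 * σ1 * s := Real.sqrt_sq (by positivity)
  have h5 : Real.sqrt (∑ k', X i k' ^ 2) ≤ 2 * s * (σ1 / σr) := by
    have h6 : Real.sqrt (∑ k', X i k' ^ 2) ≤ 1.8 * σ1 * s / (0.9 * σr) :=
      (le_div_iff₀ (by positivity : (0:ℝ) < 0.9 * σr)).mpr hQ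
    have h7 : 1.8 * σ1 * s / (0.9 * σr) = 2 * s * (σ1 / σr) := by
      field_simp; ring
    rw [h7] at h6; exact h6
  have hratio : 1 ≤ σ1 / σr := (one_le_div hσr).mpr hσ1
  have h8 : 2 * s * (σ1 / σr) ≤ 2 * s * (σ1 / σr) ^ 2 := by
    have h9 : (0:ℝ) ≤ s * ((σ1 / σr) * (σ1 / σr - 1)) :=
      mul_nonneg hs0 (mul_nonneg (by linarith) (by linarith))
    nlinarith [h9]
  rw [← hsdef]
  linarith
end
end

section
/- Let U, U* ∈ ℝ^{d×r} and let R minimize ‖U − U*Z‖_F over orthogonal r×r matrices Z; set Δ = U − U*R, M = UU^T, M* = U*(U*)^T. Then ‖UΔ^T + ΔU^T‖_F ≤ (1 + √2)·‖M − M*‖_F. -/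
open Matrix BigOperators

noncomputable section

/-- Squared Frobenius norm of a real matrix. -/
def frobSq {m n : Type*} [Fintype m] [Fintype n] (A : Matrix m n ℝ) : ℝ :=
  ∑ i, ∑ j, (A i j) ^ 2

lemma frobSq_eq_trace {m n : Type*} [Fintype m] [Fintype n] (A : Matrix m n ℝ) :
    frobSq A = Matrix.trace (A * Aᵀ) := by
  simp [frobSq, Matrix.trace, Matrix.mul_apply, Matrix.diag, sq]

lemma frobSq_nonneg {m n : Type*} [Fintype m] [Fintype n] (A : Matrix m n ℝ) :
    0 ≤ frobSq A :=
  Finset.sum_nonneg fun _ _ => Finset.sum_nonneg fun _ _ => sq_nonneg _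

lemma sqrt_frobSq_add_le {m n : Type*} [Fintype m] [Fintype n] (X Y : Matrix m n ℝ) :
    Real.sqrt (frobSq (X + Y)) ≤ Real.sqrt (frobSq X) + Real.sqrt (frobSq Y) := by
  have hX := frobSq_nonneg X
  have hY := frobSq_nonneg Y
  rw [show Real.sqrt (frobSq X) + Real.sqrt (frobSq Y)
      = Real.sqrt ((Real.sqrt (frobSq X) + Real.sqrt (frobSq Y))^2) from
    (Real.sqrt_sq (by positivity)).symm]
  apply Real.sqrt_le_sqrt
  have hcs : (∑ p : m × n, X p.1 p.2 * Y p.1 p.2) ^ 2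
      ≤ (∑ p : m × n, (X p.1 p.2)^2) * (∑ p : m × n, (Y p.1 p.2)^2) :=
    Finset.sum_mul_sq_le_sq_mul_sq _ _ _
  have h1 : frobSq X = ∑ p : m × n, (X p.1 p.2)^2 :=
    (Fintype.sum_prod_type (f := fun p => (X p.1 p.2)^2)).symm
  have h2 : frobSq Y = ∑ p : m × n, (Y p.1 p.2)^2 :=
    (Fintype.sum_prod_type (f := fun p => (Y p.1 p.2)^2)).symm
  have h3 : frobSq (X + Y) = frobSq X + frobSq Y + 2 * ∑ p : m × n, X p.1 p.2 * Y p.1 p.2 := by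
    rw [h1, h2, show frobSq (X + Y) = ∑ p : m × n, ((X + Y) p.1 p.2)^2 from
      (Fintype.sum_prod_type (f := fun p => ((X + Y) p.1 p.2)^2)).symm,
      Finset.mul_sum, ← Finset.sum_add_distrib, ← Finset.sum_add_distrib]
    apply Finset.sum_congr rfl
    intro p _
    simp only [Matrix.add_apply]
    ring
  have hT : ∑ p : m × n, X p.1 p.2 * Y p.1 p.2
      ≤ Real.sqrt (frobSq X) * Real.sqrt (frobSq Y) := by
    calc ∑ p : m × n, X p.1 p.2 * Y p.1 p.2 ≤ |∑ p : m × n, X p.1 p.2 * Y p.1 p.2| :=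
          le_abs_self _
      _ = Real.sqrt ((∑ p : m × n, X p.1 p.2 * Y p.1 p.2)^2) := (Real.sqrt_sq_eq_abs _).symm
      _ ≤ Real.sqrt (frobSq X * frobSq Y) := by
          apply Real.sqrt_le_sqrt; rw [h1, h2]; exact hcs
      _ = Real.sqrt (frobSq X) * Real.sqrt (frobSq Y) := Real.sqrt_mul hX _
  have e1 : Real.sqrt (frobSq X) ^ 2 = frobSq X := Real.sq_sqrt hX
  have e2 : Real.sqrt (frobSq Y) ^ 2 = frobSq Y := Real.sq_sqrt hY
  nlinarith [hT, h3]

lemma sum_threeCases {n : Type*} [Fintype n] [DecidableEq n] {i j : n} (hij : i ≠ j)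
    (a b : ℝ) (g : n → ℝ) :
    ∑ m, (if m = i then a else if m = j then b else g m)
      = a + b + (∑ m, g m) - g i - g j := by
  have : ∀ m, (if m = i then a else if m = j then b else g m)
      = g m + (if m = i then a - g i else 0) + (if m = j then b - g j else 0) := by
    intro m
    by_cases h1 : m = i
    · subst h1; simp [hij]
    · by_cases h2 : m = j
      · subst h2; simp [h1, Ne.symm hij]
      · simp [h1, h2]
  simp only [this, Finset.sum_add_distrib, Finset.sum_ite_eq' Finset.univ,
    Finset.mem_univ, if_true]
  ring

def givens {r : ℕ} (i j : Fin r) (θ : ℝ) : Matrix (Fin r) (Fin r) ℝ :=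
  fun k l =>
    if k = i then (if l = i then Real.cos θ else if l = j then Real.sin θ else 0)
    else if k = j then (if l = i then -Real.sin θ else if l = j then Real.cos θ else 0)
    else if k = l then 1 else 0

lemma givens_mem {r : ℕ} {i j : Fin r} (hij : i ≠ j) (θ : ℝ) :
    givens i j θ ∈ Matrix.orthogonalGroup (Fin r) ℝ := by
  rw [Matrix.mem_orthogonalGroup_iff']
  ext k l
  rw [Matrix.mul_apply]
  have hsum : ∀ m : Fin r, (givens i j θ)ᵀ k m * givens i j θ m l
      = givens i j θ m k * givens i j θ m l := by intro m; rfl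
  simp only [hsum]
  have key : ∀ m : Fin r, givens i j θ m k * givens i j θ m l
      = (if m = i then (givens i j θ i k * givens i j θ i l)
        else if m = j then (givens i j θ j k * givens i j θ j l)
        else (if m = k then 1 else 0) * (if m = l then 1 else 0)) := by
    intro m
    by_cases h1 : m = i
    · rw [if_pos h1, h1]
    · by_cases h2 : m = j
      · rw [if_neg h1, if_pos h2, h2]
      · simp [givens, h1, h2]
  rw [Finset.sum_congr rfl fun m _ => key m, sum_threeCases hij]
  have hs : (∑ m : Fin r, (if m = k then (1:ℝ) else 0) * (if m = l then 1 else 0))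
      = if k = l then 1 else 0 := by
    by_cases h : k = l
    · subst h; simp [Finset.sum_ite_eq']
    · rw [Finset.sum_eq_zero, if_neg h]
      intro m _
      by_cases h1 : m = k
      · subst h1; rw [if_neg h, mul_zero]
      · rw [if_neg h1, zero_mul]
  rw [hs]
  clear hsum key hs
  by_cases hki : k = i <;> by_cases hkj : k = j <;> by_cases hli : l = i <;>
    by_cases hlj : l = j <;>
    simp_all [givens, Matrix.one_apply, eq_comm] <;>
    nlinarith [Real.sin_sq_add_cos_sq θ]

lemma trace_transpose_givens_mul {r : ℕ} {i j : Fin r} (hij : i ≠ j) (θ : ℝ)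
    (C : Matrix (Fin r) (Fin r) ℝ) :
    Matrix.trace ((givens i j θ)ᵀ * C)
      = (Real.cos θ * C i i + Real.sin θ * C i j)
        + (-Real.sin θ * C j i + Real.cos θ * C j j)
        + Matrix.trace C - C i i - C j j := by
  have h0 : Matrix.trace ((givens i j θ)ᵀ * C) = ∑ m, ∑ k, givens i j θ m k * C m k := by
    rw [Matrix.trace]
    simp only [Matrix.diag, Matrix.mul_apply, Matrix.transpose_apply]
    rw [Finset.sum_comm]
  rw [h0]
  have hin : ∀ m, (∑ k, givens i j θ m k * C m k)
      = if m = i then Real.cos θ * C i i + Real.sin θ * C i j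
        else if m = j then -Real.sin θ * C j i + Real.cos θ * C j j
        else C m m := by
    intro m
    by_cases h1 : m = i
    · subst h1
      rw [if_pos rfl]
      have : ∀ k, givens m j θ m k * C m k
          = if k = m then Real.cos θ * C m m else if k = j then Real.sin θ * C m j else 0 := by
        intro k
        by_cases hk1 : k = m
        · subst hk1; simp [givens]
        · by_cases hk2 : k = j <;> simp [givens, hk1, hk2, Ne.symm hij]
      rw [Finset.sum_congr rfl fun k _ => this k, sum_threeCases hij]
      simp
    · by_cases h2 : m = j
      · subst h2
        rw [if_neg h1, if_pos rfl]
        have : ∀ k, givens i m θ m k * C m k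
            = if k = i then -Real.sin θ * C m i else if k = m then Real.cos θ * C m m else 0 := by
          intro k
          by_cases hk1 : k = i
          · subst hk1; simp [givens, h1, Ne.symm h1]
          · by_cases hk2 : k = m <;> simp [givens, hk1, hk2, h1]
        rw [Finset.sum_congr rfl fun k _ => this k, sum_threeCases hij]
        simp
      · rw [if_neg h1, if_neg h2]
        have : ∀ k, givens i j θ m k * C m k = if k = m then C m m else 0 := by
          intro k
          by_cases hk : k = m
          · subst hk; simp [givens, h1, h2]
          · simp [givens, h1, h2, hk, Ne.symm hk]
        rw [Finset.sum_congr rfl fun k _ => this k]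
        simp [Finset.sum_ite_eq' Finset.univ]
  rw [Finset.sum_congr rfl fun m _ => hin m, sum_threeCases hij]
  simp only [Matrix.trace, Matrix.diag]
  try ring

lemma trig_max {a b : ℝ} (h : ∀ θ : ℝ, a * Real.cos θ + b * Real.sin θ ≤ a) : b = 0 := by
  by_contra hb
  set z : ℂ := ⟨a, b⟩ with hzdef
  have hz0 : z ≠ 0 := by
    intro h0
    exact hb (by simpa using congrArg Complex.im h0)
  have habs : 0 < ‖z‖ := by
    simpa using (norm_pos_iff.mpr hz0)
  have hc : Real.cos z.arg = a / ‖z‖ := by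
    simpa using Complex.cos_arg hz0
  have hs : Real.sin z.arg = b / ‖z‖ := by
    simpa using Complex.sin_arg z
  have h1 := h z.arg
  rw [hc, hs] at h1
  have hsq : ‖z‖ ^ 2 = a * a + b * b := by
    rw [Complex.sq_norm, hzdef]
    exact Complex.normSq_mk a b
  have h2 : a * a + b * b ≤ a * ‖z‖ := by
    have := h1
    rw [← mul_div_assoc, ← mul_div_assoc, ← add_div, div_le_iff₀ habs] at this
    linarith [this]
  have hbb : 0 < b * b := mul_self_pos.mpr hb
  nlinarith [h2, hsq, habs, hbb]

lemma psd_of_trace_le {r : ℕ} {C : Matrix (Fin r) (Fin r) ℝ}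
    (hsym : Cᵀ = C)
    (hkey : ∀ W ∈ Matrix.orthogonalGroup (Fin r) ℝ,
      Matrix.trace (Wᵀ * C) ≤ Matrix.trace C) :
    C.PosSemidef := by
  have hherm : C.IsHermitian := by
    rwa [Matrix.IsHermitian, Matrix.conjTranspose_eq_transpose_of_trivial]
  set V : Matrix (Fin r) (Fin r) ℝ := (hherm.eigenvectorUnitary : Matrix (Fin r) (Fin r) ℝ)
    with hVdef
  have hVmem : V ∈ Matrix.unitaryGroup (Fin r) ℝ := (hherm.eigenvectorUnitary).2
  have hVV : star V * V = 1 := Matrix.mem_unitaryGroup_iff'.mp hVmem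
  have hVV' : V * star V = 1 := Matrix.mem_unitaryGroup_iff.mp hVmem
  have hstarV : star V = Vᵀ := by
    rw [Matrix.star_eq_conjTranspose, Matrix.conjTranspose_eq_transpose_of_trivial]
  set lam : Fin r → ℝ := hherm.eigenvalues with hlam
  have hspec : C = V * Matrix.diagonal lam * Vᵀ := by
    have := hherm.spectral_theorem
    rw [Unitary.conjStarAlgAut_apply] at this
    rw [← hstarV, hVdef]
    exact this
  have htraceform : ∀ f : Fin r → ℝ,
      Matrix.trace (V * Matrix.diagonal f * Vᵀ) = ∑ i, f i := by
    intro f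
    rw [← hstarV, Matrix.trace_mul_cycle, hVV, Matrix.one_mul, Matrix.trace_diagonal]
  set dsgn : Fin r → ℝ := fun i => if lam i < 0 then (-1 : ℝ) else 1 with hdsgn
  set W : Matrix (Fin r) (Fin r) ℝ := V * Matrix.diagonal dsgn * Vᵀ with hWdef
  have hDD : Matrix.diagonal dsgn * Matrix.diagonal dsgn = 1 := by
    have hdd : (fun i => dsgn i * dsgn i) = fun _ => (1:ℝ) := by
      funext i
      by_cases h : lam i < 0 <;> simp [hdsgn, h]
    rw [Matrix.diagonal_mul_diagonal, hdd, Matrix.diagonal_one]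
  have hWmem : W ∈ Matrix.orthogonalGroup (Fin r) ℝ := by
    rw [Matrix.mem_orthogonalGroup_iff]
    have hstarW : star W = W := by
      rw [Matrix.star_eq_conjTranspose, Matrix.conjTranspose_eq_transpose_of_trivial, hWdef]
      rw [Matrix.transpose_mul, Matrix.transpose_mul, Matrix.transpose_transpose,
        Matrix.diagonal_transpose, Matrix.mul_assoc]
    rw [← Matrix.conjTranspose_eq_transpose_of_trivial, ← Matrix.star_eq_conjTranspose, hstarW, hWdef]
    calc V * Matrix.diagonal dsgn * Vᵀ * (V * Matrix.diagonal dsgn * Vᵀ)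
        = V * Matrix.diagonal dsgn * (Vᵀ * V) * Matrix.diagonal dsgn * Vᵀ := by
          simp only [Matrix.mul_assoc]
      _ = V * (Matrix.diagonal dsgn * Matrix.diagonal dsgn) * Vᵀ := by
          rw [← hstarV, hVV]
          simp only [Matrix.mul_one, Matrix.mul_assoc]
      _ = 1 := by rw [hDD, Matrix.mul_one, ← hstarV, hVV']
  have hWT : Wᵀ = W := by
    rw [hWdef, Matrix.transpose_mul, Matrix.transpose_mul, Matrix.transpose_transpose,
      Matrix.diagonal_transpose, Matrix.mul_assoc]
  have htrW : Matrix.trace (Wᵀ * C) = ∑ i, dsgn i * lam i := by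
    rw [hWT, hWdef, hspec]
    calc Matrix.trace (V * Matrix.diagonal dsgn * Vᵀ * (V * Matrix.diagonal lam * Vᵀ))
        = Matrix.trace (V * (Matrix.diagonal dsgn * (Vᵀ * V) * Matrix.diagonal lam) * Vᵀ) := by
          simp only [Matrix.mul_assoc]
      _ = Matrix.trace (V * Matrix.diagonal (fun i => dsgn i * lam i) * Vᵀ) := by
          rw [← hstarV, hVV, Matrix.mul_one, Matrix.diagonal_mul_diagonal]
      _ = ∑ i, dsgn i * lam i := htraceform _
  have htrC : Matrix.trace C = ∑ i, lam i := by
    rw [hspec, htraceform]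
  have hle := hkey W hWmem
  rw [htrW, htrC] at hle
  have habs : ∀ i, dsgn i * lam i = |lam i| := by
    intro i
    by_cases h : lam i < 0
    · simp [hdsgn, h, abs_of_neg h]
    · simp [hdsgn, h, abs_of_nonneg (not_lt.mp h)]
  rw [Finset.sum_congr rfl fun i _ => habs i] at hle
  have hpoint : ∀ i ∈ Finset.univ, lam i ≤ |lam i| := fun i _ => le_abs_self _
  have heq := (Finset.sum_eq_sum_iff_of_le hpoint).mp
    (le_antisymm (Finset.sum_le_sum hpoint) hle)
  have hnonneg : ∀ i, 0 ≤ lam i := by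
    intro i
    have := (heq i (Finset.mem_univ i)).symm
    exact abs_eq_self.mp this
  exact hherm.posSemidef_iff_eigenvalues_nonneg.mpr hnonneg

lemma trace_four {α β : Type*} [Fintype α] [Fintype β]
    (X : Matrix α β ℝ) (Y : Matrix β α ℝ) (Z : Matrix α β ℝ) (W : Matrix β α ℝ) :
    Matrix.trace (X * Y * (Z * W)) = Matrix.trace ((Y * Z) * (W * X)) := by
  calc Matrix.trace (X * Y * (Z * W)) = Matrix.trace (X * (Y * (Z * W))) := by
        rw [Matrix.mul_assoc]
    _ = Matrix.trace ((Y * (Z * W)) * X) := Matrix.trace_mul_comm _ _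
    _ = Matrix.trace ((Y * Z) * (W * X)) := by simp only [Matrix.mul_assoc]

lemma trace_cyc3 {α β γ : Type*} [Fintype α] [Fintype β] [Fintype γ]
    (X : Matrix α β ℝ) (Y : Matrix β γ ℝ) (Z : Matrix γ α ℝ) :
    Matrix.trace (X * (Y * Z)) = Matrix.trace (Z * (X * Y)) := by
  rw [← Matrix.mul_assoc, Matrix.trace_mul_cycle, Matrix.mul_assoc]

lemma trace_psd_nonneg {n : Type*} [Fintype n] [DecidableEq n] {X : Matrix n n ℝ} (hX : X.PosSemidef) :
    0 ≤ Matrix.trace X := by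
  rw [Matrix.trace]
  apply Finset.sum_nonneg
  intro i _
  exact hX.diag_nonneg

/-- With `R` the optimal orthogonal alignment, `Δ = U − U*R`, `M = UUᵀ`, `M* = U*(U*)ᵀ`:
`‖UΔᵀ + ΔUᵀ‖_F ≤ (1 + √2)‖M − M*‖_F`. -/
theorem stmt17 {d r : ℕ} (U Ustar : Matrix (Fin d) (Fin r) ℝ)
    (R : Matrix (Fin r) (Fin r) ℝ) (hR : R ∈ Matrix.orthogonalGroup (Fin r) ℝ)
    (hmin : ∀ Z ∈ Matrix.orthogonalGroup (Fin r) ℝ,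
      frobSq (U - Ustar * R) ≤ frobSq (U - Ustar * Z)) :
    Real.sqrt (frobSq (U * (U - Ustar * R)ᵀ + (U - Ustar * R) * Uᵀ)) ≤
      (1 + Real.sqrt 2) * Real.sqrt (frobSq (U * Uᵀ - Ustar * Ustarᵀ)) := by
  classical
  set Q : Matrix (Fin d) (Fin r) ℝ := Ustar * R with hQdef
  set Δ : Matrix (Fin d) (Fin r) ℝ := U - Q with hΔdef
  set B : Matrix (Fin r) (Fin r) ℝ := Ustarᵀ * U with hBdef
  set C : Matrix (Fin r) (Fin r) ℝ := B * Rᵀ with hCdef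
  set A : Matrix (Fin r) (Fin r) ℝ := Uᵀ * Q with hAdef
  set P : Matrix (Fin r) (Fin r) ℝ := Uᵀ * U with hPdef
  set G : Matrix (Fin r) (Fin r) ℝ := Qᵀ * Q with hGdef
  clear_value Q Δ B C A P G
  have hRRT : R * Rᵀ = 1 := by
    have := (Matrix.mem_orthogonalGroup_iff (Fin r) ℝ).mp hR
    exact this
  have hRTR : Rᵀ * R = 1 := by
    have := (Matrix.mem_orthogonalGroup_iff' (Fin r) ℝ).mp hR
    exact this
  -- `M* = Q Qᵀ`
  have hQQ : Ustar * Ustarᵀ = Q * Qᵀ := by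
    rw [hQdef, Matrix.transpose_mul, show Ustar * R * (Rᵀ * Ustarᵀ)
      = Ustar * (R * Rᵀ) * Ustarᵀ by simp only [Matrix.mul_assoc], hRRT,
      Matrix.mul_one]
  -- expansion of the objective
  have hexpand : ∀ Z : Matrix (Fin r) (Fin r) ℝ, Z ∈ Matrix.orthogonalGroup (Fin r) ℝ →
      frobSq (U - Ustar * Z) = Matrix.trace (U * Uᵀ) + Matrix.trace (Ustar * Ustarᵀ)
        - 2 * Matrix.trace (Zᵀ * B) := by
    intro Z hZ
    have hZZT : Z * Zᵀ = 1 := by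
      have := (Matrix.mem_orthogonalGroup_iff (Fin r) ℝ).mp hZ
      exact this
    rw [frobSq_eq_trace]
    have h1 : (U - Ustar * Z) * (U - Ustar * Z)ᵀ
        = U * Uᵀ - U * (Zᵀ * Ustarᵀ) - Ustar * Z * Uᵀ + Ustar * Z * (Zᵀ * Ustarᵀ) := by
      rw [Matrix.transpose_sub, Matrix.transpose_mul, Matrix.sub_mul, Matrix.mul_sub,
        Matrix.mul_sub]
      abel
    rw [h1]
    have h2 : Ustar * Z * (Zᵀ * Ustarᵀ) = Ustar * Ustarᵀ := by
      rw [show Ustar * Z * (Zᵀ * Ustarᵀ) = Ustar * (Z * Zᵀ) * Ustarᵀ by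
        simp only [Matrix.mul_assoc], hZZT, Matrix.mul_one]
    have h3 : Matrix.trace (U * (Zᵀ * Ustarᵀ)) = Matrix.trace (Zᵀ * B) := by
      rw [hBdef]
      exact (trace_cyc3 Zᵀ Ustarᵀ U).symm
    have h4 : Matrix.trace (Ustar * Z * Uᵀ) = Matrix.trace (Zᵀ * B) := by
      calc Matrix.trace (Ustar * Z * Uᵀ) = Matrix.trace (Uᵀ * (Ustar * Z)) :=
            Matrix.trace_mul_comm _ _
        _ = Matrix.trace ((Uᵀ * (Ustar * Z))ᵀ) := (Matrix.trace_transpose _).symm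
        _ = Matrix.trace (Zᵀ * B) := by
            rw [Matrix.transpose_mul, Matrix.transpose_mul, Matrix.transpose_transpose, hBdef]
            simp only [Matrix.mul_assoc]
    rw [Matrix.trace_add, Matrix.trace_sub, Matrix.trace_sub, h2, h3, h4]
    ring
  -- the key trace inequality for C
  have hkey : ∀ W ∈ Matrix.orthogonalGroup (Fin r) ℝ,
      Matrix.trace (Wᵀ * C) ≤ Matrix.trace C := by
    intro W hW
    have hZ : W * R ∈ Matrix.orthogonalGroup (Fin r) ℝ := mul_mem hW hR
    have h1 := hmin (W * R) hZ
    rw [hΔdef, hQdef] at h1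
    rw [hexpand R hR, hexpand (W * R) hZ] at h1
    have h2 : Matrix.trace ((W * R)ᵀ * B) = Matrix.trace (Wᵀ * C) := by
      rw [Matrix.transpose_mul, hCdef, Matrix.mul_assoc]
      exact (trace_cyc3 Wᵀ B Rᵀ).symm
    have h3 : Matrix.trace (Rᵀ * B) = Matrix.trace C := by
      rw [hCdef, Matrix.trace_mul_comm]
    rw [h2, h3] at h1
    linarith
  -- symmetry of C
  have hCsym : Cᵀ = C := by
    ext i j
    rw [Matrix.transpose_apply]
    rcases eq_or_ne j i with h | hij
    · rw [h]
    · have hb : C j i - C i j = 0 := by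
        apply trig_max (a := C j j + C i i)
        intro θ
        have h1 := hkey (givens j i θ) (givens_mem hij θ)
        rw [trace_transpose_givens_mul hij θ C] at h1
        linarith
      linarith [hb]
  have hC : C.PosSemidef := psd_of_trace_le hCsym hkey
  -- A in terms of C
  have hA2 : A = Rᵀ * C * R := by
    have hRC : Rᵀ * C * R = Rᵀ * B := by
      rw [hCdef]
      simp only [Matrix.mul_assoc]
      rw [hRTR, Matrix.mul_one]
    have hAT : Aᵀ = Rᵀ * B := by
      rw [hAdef, hQdef, hBdef]
      simp only [Matrix.transpose_mul, Matrix.transpose_transpose, Matrix.mul_assoc]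
    have hsymRC : (Rᵀ * C * R)ᵀ = Rᵀ * C * R := by
      rw [Matrix.transpose_mul, Matrix.transpose_mul, Matrix.transpose_transpose, hCsym,
        Matrix.mul_assoc]
    calc A = Aᵀᵀ := (Matrix.transpose_transpose A).symm
      _ = (Rᵀ * B)ᵀ := by rw [hAT]
      _ = (Rᵀ * C * R)ᵀ := by rw [hRC]
      _ = Rᵀ * C * R := hsymRC
  have hAsym : Aᵀ = A := by
    rw [hA2, Matrix.transpose_mul, Matrix.transpose_mul, Matrix.transpose_transpose, hCsym,
      Matrix.mul_assoc]
  have hApsd : A.PosSemidef := by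
    rw [hA2]
    have := hC.mul_mul_conjTranspose_same Rᵀ
    rwa [Matrix.conjTranspose_eq_transpose_of_trivial, Matrix.transpose_transpose] at this
  -- Δᵀ Δ
  have hS : Δᵀ * Δ = P + G - A - A := by
    rw [hΔdef, Matrix.transpose_sub, Matrix.sub_mul, Matrix.mul_sub, Matrix.mul_sub,
      hPdef, hGdef, hAdef]
    have hQU : Qᵀ * U = A := by
      rw [← hAsym, hAdef, Matrix.transpose_mul, Matrix.transpose_transpose]
    rw [hQU, hAdef]
    abel
  -- scalar abbreviations
  have haat : Matrix.trace (A * Aᵀ) = Matrix.trace (A * A) := by rw [hAsym]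
  -- frobSq (Δ Δᵀ) = trace (S S)
  have e1 : frobSq (Δ * Δᵀ) = Matrix.trace ((Δᵀ * Δ) * (Δᵀ * Δ)) := by
    rw [frobSq_eq_trace, Matrix.transpose_mul, Matrix.transpose_transpose, trace_four]
  have e2 : Matrix.trace ((Δᵀ * Δ) * (Δᵀ * Δ))
      = Matrix.trace (P * P) + Matrix.trace (G * G) + 4 * Matrix.trace (A * A)
        + 2 * Matrix.trace (P * G) - 4 * Matrix.trace (P * A) - 4 * Matrix.trace (G * A) := by
    rw [hS]
    simp only [Matrix.sub_mul, Matrix.mul_sub, Matrix.add_mul, Matrix.mul_add,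
      Matrix.trace_sub, Matrix.trace_add]
    rw [Matrix.trace_mul_comm G P, Matrix.trace_mul_comm A P, Matrix.trace_mul_comm A G]
    ring
  -- frobSq (M − M*)
  have e3 : frobSq (U * Uᵀ - Ustar * Ustarᵀ)
      = Matrix.trace (P * P) + Matrix.trace (G * G) - 2 * Matrix.trace (A * A) := by
    rw [hQQ, frobSq_eq_trace]
    have h1 : (U * Uᵀ - Q * Qᵀ)ᵀ = U * Uᵀ - Q * Qᵀ := by
      rw [Matrix.transpose_sub, Matrix.transpose_mul, Matrix.transpose_mul,
        Matrix.transpose_transpose, Matrix.transpose_transpose]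
    rw [h1, Matrix.sub_mul, Matrix.mul_sub, Matrix.mul_sub, Matrix.trace_sub,
      Matrix.trace_sub, Matrix.trace_sub]
    rw [trace_four U Uᵀ U Uᵀ, trace_four U Uᵀ Q Qᵀ, trace_four Q Qᵀ U Uᵀ,
      trace_four Q Qᵀ Q Qᵀ]
    have hQU : Qᵀ * U = Aᵀ := by
      rw [hAdef, Matrix.transpose_mul, Matrix.transpose_transpose]
    rw [hQU, ← hPdef, ← hGdef, ← hAdef]
    rw [Matrix.trace_mul_comm Aᵀ A]
    rw [haat]
    ring
  -- trace ((P−G)²) ≥ 0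
  have hPG : 0 ≤ Matrix.trace (P * P) + Matrix.trace (G * G) - 2 * Matrix.trace (P * G) := by
    have hsym : (P - G)ᵀ = P - G := by
      rw [Matrix.transpose_sub, hPdef, hGdef, Matrix.transpose_mul, Matrix.transpose_mul,
        Matrix.transpose_transpose, Matrix.transpose_transpose]
    have h0 : 0 ≤ frobSq (P - G) := frobSq_nonneg _
    rw [frobSq_eq_trace, hsym, Matrix.sub_mul, Matrix.mul_sub, Matrix.mul_sub,
      Matrix.trace_sub, Matrix.trace_sub, Matrix.trace_sub,
      Matrix.trace_mul_comm G P] at h0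
    linarith
  -- trace (S A) ≥ 0
  have hSA : 0 ≤ Matrix.trace (P * A) + Matrix.trace (G * A) - 2 * Matrix.trace (A * A) := by
    have h1 : Matrix.trace ((Δᵀ * Δ) * A) = Matrix.trace (Δ * A * Δᵀ) := by
      rw [Matrix.mul_assoc, Matrix.trace_mul_comm, Matrix.mul_assoc]
    have h2 : (Δ * A * Δᵀ).PosSemidef := by
      have := hApsd.mul_mul_conjTranspose_same Δ
      rwa [Matrix.conjTranspose_eq_transpose_of_trivial] at this
    have h3 : 0 ≤ Matrix.trace ((Δᵀ * Δ) * A) := h1 ▸ trace_psd_nonneg h2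
    rw [hS] at h3
    simp only [Matrix.sub_mul, Matrix.add_mul, Matrix.trace_sub, Matrix.trace_add] at h3
    linarith
  -- alignment bound
  have halign : frobSq (Δ * Δᵀ) ≤ 2 * frobSq (U * Uᵀ - Ustar * Ustarᵀ) := by
    rw [e1, e2, e3]
    linarith
  -- matrix identity
  have hid : U * Δᵀ + Δ * Uᵀ = (U * Uᵀ - Ustar * Ustarᵀ) + Δ * Δᵀ := by
    rw [hQQ, hΔdef, Matrix.transpose_sub, Matrix.mul_sub, Matrix.sub_mul,
      Matrix.sub_mul, Matrix.mul_sub, Matrix.mul_sub]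
    abel
  -- finish
  have hMnn : 0 ≤ frobSq (U * Uᵀ - Ustar * Ustarᵀ) := frobSq_nonneg _
  have htri := sqrt_frobSq_add_le (U * Uᵀ - Ustar * Ustarᵀ) (Δ * Δᵀ)
  rw [← hid] at htri
  have hmono : Real.sqrt (frobSq (Δ * Δᵀ))
      ≤ Real.sqrt 2 * Real.sqrt (frobSq (U * Uᵀ - Ustar * Ustarᵀ)) := by
    rw [← Real.sqrt_mul (by norm_num : (0:ℝ) ≤ 2)]
    exact Real.sqrt_le_sqrt halign
  calc Real.sqrt (frobSq (U * Δᵀ + Δ * Uᵀ))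
      ≤ Real.sqrt (frobSq (U * Uᵀ - Ustar * Ustarᵀ)) + Real.sqrt (frobSq (Δ * Δᵀ)) := htri
    _ ≤ Real.sqrt (frobSq (U * Uᵀ - Ustar * Ustarᵀ))
        + Real.sqrt 2 * Real.sqrt (frobSq (U * Uᵀ - Ustar * Ustarᵀ)) := by linarith
    _ = (1 + Real.sqrt 2) * Real.sqrt (frobSq (U * Uᵀ - Ustar * Ustarᵀ)) := by ring
end
end

section
/- Let A be a d×d symmetric PSD matrix with σ_r(A) ≥ 15·σ_{r+1}(A), and let f(U) = ‖UU^T − A‖_F² for U ∈ ℝ^{d×r}. Then every U with ∇f(U) = 0 and ∇²f(U) ⪰ 0 satisfies UU^T = P_r(A), the best rank-r approximation of A. -/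
open Matrix BigOperators

set_option maxHeartbeats 1000000
set_option synthInstance.maxHeartbeats 400000

noncomputable section

attribute [local instance] Matrix.normedAddCommGroup Matrix.normedSpace

namespace Landscape

/-- Frobenius inner product. -/
def ip {m n : Type*} [Fintype m] [Fintype n] (X Y : Matrix m n ℝ) : ℝ :=
  ∑ i, ∑ j, X i j * Y i j

variable {m n p : Type*} [Fintype m] [Fintype n] [Fintype p]

lemma ip_comm (X Y : Matrix m n ℝ) : ip X Y = ip Y X := by
  simp [ip, mul_comm]

lemma ip_add_left (X X' Y : Matrix m n ℝ) : ip (X + X') Y = ip X Y + ip X' Y := by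
  simp [ip, add_mul, Finset.sum_add_distrib]

lemma ip_add_right (X Y Y' : Matrix m n ℝ) : ip X (Y + Y') = ip X Y + ip X Y' := by
  simp [ip, mul_add, Finset.sum_add_distrib]

lemma ip_smul_left (c : ℝ) (X Y : Matrix m n ℝ) : ip (c • X) Y = c * ip X Y := by
  simp [ip, Finset.mul_sum, mul_assoc]

lemma ip_smul_right (c : ℝ) (X Y : Matrix m n ℝ) : ip X (c • Y) = c * ip X Y := by
  simp [ip, Finset.mul_sum]; congr 1; ext i; congr 1; ext j; ring

lemma ip_sub_left (X X' Y : Matrix m n ℝ) : ip (X - X') Y = ip X Y - ip X' Y := by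
  simp [ip, sub_mul, Finset.sum_sub_distrib]

lemma ip_sub_right (X Y Y' : Matrix m n ℝ) : ip X (Y - Y') = ip X Y - ip X Y' := by
  simp [ip, mul_sub, Finset.sum_sub_distrib]

lemma frobSq_eq_ip (X : Matrix m n ℝ) : frobSq X = ip X X := by
  simp [frobSq, ip, pow_two]

lemma ip_self_nonneg (X : Matrix m n ℝ) : 0 ≤ ip X X :=
  Finset.sum_nonneg fun i _ => Finset.sum_nonneg fun j _ => mul_self_nonneg _

lemma eq_zero_of_ip_self (X : Matrix m n ℝ) (h : ip X X = 0) : X = 0 := by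
  ext i j
  have h1 : ∀ i ∈ Finset.univ, (0:ℝ) ≤ ∑ j, X i j * X i j :=
    fun i _ => Finset.sum_nonneg fun j _ => mul_self_nonneg _
  have h2 := (Finset.sum_eq_zero_iff_of_nonneg h1).mp h i (Finset.mem_univ i)
  have h3 : ∀ j ∈ Finset.univ, (0:ℝ) ≤ X i j * X i j := fun j _ => mul_self_nonneg _
  have := (Finset.sum_eq_zero_iff_of_nonneg h3).mp h2 j (Finset.mem_univ j)
  have := mul_self_eq_zero.mp this
  simpa using this

/-- `ip X (Z * Yᵀ) = ip (X * Y) Z`. -/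
lemma ip_mul_transpose_right (X : Matrix m m ℝ) (Z Y : Matrix m n ℝ) :
    ip X (Z * Yᵀ) = ip (X * Y) Z := by
  simp only [ip, Matrix.mul_apply, Matrix.transpose_apply, Finset.mul_sum, Finset.sum_mul]
  apply Finset.sum_congr rfl; intro i _
  rw [Finset.sum_comm]
  apply Finset.sum_congr rfl; intro k _
  apply Finset.sum_congr rfl; intro j _
  ring

/-- `ip X (Y * Zᵀ) = ip (Xᵀ * Y) Z`. -/
lemma ip_transpose_mul_right (X : Matrix m m ℝ) (Y Z : Matrix m n ℝ) :
    ip X (Y * Zᵀ) = ip (Xᵀ * Y) Z := by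
  simp only [ip, Matrix.mul_apply, Matrix.transpose_apply, Finset.mul_sum, Finset.sum_mul]
  rw [Finset.sum_comm]
  apply Finset.sum_congr rfl; intro i _
  rw [Finset.sum_comm]
  apply Finset.sum_congr rfl; intro k _
  apply Finset.sum_congr rfl; intro j _
  ring

lemma dotProduct_mulVec_left (M : Matrix m n ℝ) (w : n → ℝ) (u : m → ℝ) :
    (M *ᵥ w) ⬝ᵥ u = w ⬝ᵥ (Mᵀ *ᵥ u) := by
  rw [dotProduct_comm, Matrix.dotProduct_mulVec, ← Matrix.mulVec_transpose,
    dotProduct_comm]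

lemma ip_vecMulVec (a c : m → ℝ) (b e : n → ℝ) :
    ip (Matrix.vecMulVec a b) (Matrix.vecMulVec c e) = (a ⬝ᵥ c) * (b ⬝ᵥ e) := by
  simp only [ip, Matrix.vecMulVec_apply, dotProduct, Finset.sum_mul_sum]
  apply Finset.sum_congr rfl; intro i _
  apply Finset.sum_congr rfl; intro j _
  ring

lemma ip_vecMulVec_right (X : Matrix m n ℝ) (a : m → ℝ) (b : n → ℝ) :
    ip X (Matrix.vecMulVec a b) = a ⬝ᵥ (X *ᵥ b) := by
  simp only [ip, Matrix.vecMulVec_apply, dotProduct, Matrix.mulVec,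
    Finset.mul_sum]
  apply Finset.sum_congr rfl; intro i _
  apply Finset.sum_congr rfl; intro j _
  ring

lemma mul_vecMulVec (X : Matrix m n ℝ) (b : n → ℝ) (c : p → ℝ) :
    X * Matrix.vecMulVec b c = Matrix.vecMulVec (X *ᵥ b) c := by
  ext i j
  simp only [Matrix.mul_apply, Matrix.vecMulVec_apply, Matrix.mulVec, dotProduct,
    Finset.sum_mul]
  apply Finset.sum_congr rfl; intro k _
  ring

lemma vecMulVec_mul (a : m → ℝ) (b : n → ℝ) (X : Matrix n p ℝ) :
    Matrix.vecMulVec a b * X = Matrix.vecMulVec a (b ᵥ* X) := by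
  ext i j
  simp only [Matrix.mul_apply, Matrix.vecMulVec_apply, Matrix.vecMul, dotProduct,
    Finset.mul_sum]
  apply Finset.sum_congr rfl; intro k _
  ring

lemma vecMul_vecMulVec (b c : m → ℝ) (u : n → ℝ) :
    b ᵥ* Matrix.vecMulVec c u = (b ⬝ᵥ c) • u := by
  funext j
  simp only [Matrix.vecMul, Matrix.vecMulVec_apply, dotProduct, Pi.smul_apply,
    smul_eq_mul, Finset.sum_mul]
  apply Finset.sum_congr rfl; intro k _
  ring

lemma vecMulVec_smul_right (a : m → ℝ) (c : ℝ) (b : n → ℝ) :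
    Matrix.vecMulVec a (c • b) = c • Matrix.vecMulVec a b := by
  ext i j
  simp only [Matrix.vecMulVec_apply, Pi.smul_apply, smul_eq_mul, Matrix.smul_apply]
  ring

lemma vecMulVec_transpose' (a : m → ℝ) (b : n → ℝ) :
    (Matrix.vecMulVec a b)ᵀ = Matrix.vecMulVec b a := by
  ext i j
  simp [Matrix.vecMulVec_apply, mul_comm]

lemma dot_self_nonneg (v : m → ℝ) : 0 ≤ v ⬝ᵥ v :=
  Finset.sum_nonneg fun _ _ => mul_self_nonneg _

lemma dot_self_pos {v : m → ℝ} (hv : v ≠ 0) : 0 < v ⬝ᵥ v :=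
  lt_of_le_of_ne (dot_self_nonneg v)
    (fun h => hv (dotProduct_self_eq_zero.mp h.symm))

lemma sum_dot {ι : Type*} (s : Finset ι) (f : ι → (m → ℝ)) (v : m → ℝ) :
    (∑ i ∈ s, f i) ⬝ᵥ v = ∑ i ∈ s, (f i ⬝ᵥ v) := by
  simp only [dotProduct, Finset.sum_apply, Finset.sum_mul]
  rw [Finset.sum_comm]

lemma li_of_orthogonal {ι : Type*} [Fintype ι] (g : ι → (m → ℝ))
    (h0 : ∀ k, g k ⬝ᵥ g k ≠ 0) (horth : ∀ k l, k ≠ l → g k ⬝ᵥ g l = 0) :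
    LinearIndependent ℝ g := by
  rw [Fintype.linearIndependent_iff]
  intro c hc k
  have h := congrArg (fun x : m → ℝ => x ⬝ᵥ g k) hc
  simp only [zero_dotProduct] at h
  rw [sum_dot] at h
  have hsingle : ∀ l ∈ Finset.univ, l ≠ k → (c l • g l) ⬝ᵥ g k = 0 := by
    intro l _ hlk
    rw [smul_dotProduct, horth l k hlk, smul_zero]
  rw [Finset.sum_eq_single_of_mem k (Finset.mem_univ k) hsingle,
    smul_dotProduct, smul_eq_mul] at h
  exact (mul_eq_zero.mp h).resolve_right (h0 k)

end Landscape

open Landscape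

section CLM

variable {E F G : Type*} [NormedAddCommGroup E] [NormedSpace ℝ E]
  [NormedAddCommGroup F] [NormedSpace ℝ F] [NormedAddCommGroup G] [NormedSpace ℝ G]
  [FiniteDimensional ℝ E] [FiniteDimensional ℝ F]

/-- Upgrade a bilinear map between finite-dimensional normed spaces to a continuous
bilinear map. -/
def toCLM2 (b : E →ₗ[ℝ] F →ₗ[ℝ] G) : E →L[ℝ] F →L[ℝ] G :=
  LinearMap.toContinuousLinearMap
    { toFun := fun x => LinearMap.toContinuousLinearMap (b x)
      map_add' := fun x y => by ext z; simp
      map_smul' := fun c x => by ext z; simp }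

@[simp] lemma toCLM2_apply (b : E →ₗ[ℝ] F →ₗ[ℝ] G) (x : E) (y : F) :
    toCLM2 b x y = b x y := rfl

end CLM

namespace Landscape

variable {d r : ℕ}

/-- Matrix multiplication as a bilinear map. -/
def mulBil : Matrix (Fin d) (Fin r) ℝ →ₗ[ℝ] Matrix (Fin r) (Fin d) ℝ →ₗ[ℝ]
    Matrix (Fin d) (Fin d) ℝ :=
  LinearMap.mk₂ ℝ (· * ·) Matrix.add_mul Matrix.smul_mul Matrix.mul_add
    (fun c M N => Matrix.mul_smul M c N)

/-- Frobenius inner product as a bilinear map. -/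
def ipBil : Matrix (Fin d) (Fin d) ℝ →ₗ[ℝ] Matrix (Fin d) (Fin d) ℝ →ₗ[ℝ] ℝ :=
  LinearMap.mk₂ ℝ ip ip_add_left ip_smul_left ip_add_right ip_smul_right

/-- Transpose as a continuous linear map. -/
def tCLM : Matrix (Fin d) (Fin r) ℝ →L[ℝ] Matrix (Fin r) (Fin d) ℝ :=
  LinearMap.toContinuousLinearMap
    ((Matrix.transposeLinearEquiv (Fin d) (Fin r) ℝ ℝ).toLinearMap)

@[simp] lemma tCLM_apply (X : Matrix (Fin d) (Fin r) ℝ) : tCLM X = Xᵀ := rfl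

/-- Derivative of `X ↦ X * Xᵀ - A` at `W`. -/
def phiD (W : Matrix (Fin d) (Fin r) ℝ) :
    Matrix (Fin d) (Fin r) ℝ →L[ℝ] Matrix (Fin d) (Fin d) ℝ :=
  LinearMap.toContinuousLinearMap
    { toFun := fun Z => W * Zᵀ + Z * Wᵀ
      map_add' := fun Z Z' => by
        simp only [Matrix.transpose_add, Matrix.mul_add, Matrix.add_mul]
        abel
      map_smul' := fun c Z => by
        simp [Matrix.transpose_smul, Matrix.mul_smul, Matrix.smul_mul, smul_add] }

@[simp] lemma phiD_apply (W Z : Matrix (Fin d) (Fin r) ℝ) :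
    phiD W Z = W * Zᵀ + Z * Wᵀ := rfl

lemma hasFDerivAt_phi (A : Matrix (Fin d) (Fin d) ℝ) (W : Matrix (Fin d) (Fin r) ℝ) :
    HasFDerivAt (fun X : Matrix (Fin d) (Fin r) ℝ => X * Xᵀ - A) (phiD W) W := by
  have hbil := (toCLM2 (mulBil (d := d) (r := r))).isBoundedBilinearMap
  have hin : HasFDerivAt (fun X : Matrix (Fin d) (Fin r) ℝ => (X, tCLM X))
      ((ContinuousLinearMap.id ℝ _).prod tCLM) W :=
    HasFDerivAt.prodMk (hasFDerivAt_id W) (tCLM.hasFDerivAt)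
  have h := ((hbil.hasFDerivAt (W, tCLM W)).comp W hin).sub_const A
  refine h.congr_fderiv ?_
  ext Z : 1
  rfl

/-- The bilinear (in `(M', W)`) family of gradient-type continuous linear maps. -/
def cBil : Matrix (Fin d) (Fin d) ℝ →ₗ[ℝ] Matrix (Fin d) (Fin r) ℝ →ₗ[ℝ]
    (Matrix (Fin d) (Fin r) ℝ →L[ℝ] ℝ) :=
  LinearMap.mk₂ ℝ
    (fun M' W => LinearMap.toContinuousLinearMap
      { toFun := fun Z => ip M' (phiD W Z) + ip (phiD W Z) M'
        map_add' := fun Z Z' => by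
          simp only [_root_.map_add, ip_add_left, ip_add_right]; ring
        map_smul' := fun c Z => by
          simp only [_root_.map_smul, ip_smul_left, ip_smul_right, RingHom.id_apply,
            smul_eq_mul]; ring })
    (fun M₁ M₂ W => by
      ext Z; simp only [LinearMap.coe_toContinuousLinearMap', LinearMap.coe_mk,
        AddHom.coe_mk, ContinuousLinearMap.add_apply, ip_add_left, ip_add_right,
        LinearMap.coe_toContinuousLinearMap']; ring)
    (fun c M' W => by
      ext Z; simp only [LinearMap.coe_toContinuousLinearMap', LinearMap.coe_mk,
        AddHom.coe_mk, ContinuousLinearMap.smul_apply, ip_smul_left, ip_smul_right,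
        smul_eq_mul]; ring)
    (fun M' W₁ W₂ => by
      ext Z; simp only [LinearMap.coe_toContinuousLinearMap', LinearMap.coe_mk,
        AddHom.coe_mk, ContinuousLinearMap.add_apply, phiD_apply, Matrix.transpose_add,
        Matrix.add_mul, Matrix.mul_add, ip_add_left, ip_add_right]; ring
      )
    (fun c M' W => by
      ext Z; simp only [LinearMap.coe_toContinuousLinearMap', LinearMap.coe_mk,
        AddHom.coe_mk, ContinuousLinearMap.smul_apply, phiD_apply,
        Matrix.transpose_smul, Matrix.smul_mul, Matrix.mul_smul, smul_eq_mul, ← smul_add,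
        ip_smul_left, ip_smul_right]; ring)

@[simp] lemma cBil_apply (M' : Matrix (Fin d) (Fin d) ℝ) (W Z : Matrix (Fin d) (Fin r) ℝ) :
    cBil M' W Z = ip M' (W * Zᵀ + Z * Wᵀ) + ip (W * Zᵀ + Z * Wᵀ) M' := rfl

/-- Gradient of `f` at `W`. -/
def gradD (A : Matrix (Fin d) (Fin d) ℝ) (W : Matrix (Fin d) (Fin r) ℝ) :
    Matrix (Fin d) (Fin r) ℝ →L[ℝ] ℝ :=
  cBil (W * Wᵀ - A) W

lemma hasFDerivAt_f (A : Matrix (Fin d) (Fin d) ℝ) (W : Matrix (Fin d) (Fin r) ℝ) :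
    HasFDerivAt (fun X : Matrix (Fin d) (Fin r) ℝ => frobSq (X * Xᵀ - A)) (gradD A W) W := by
  have hbil := (toCLM2 (ipBil (d := d))).isBoundedBilinearMap
  have hΦ := hasFDerivAt_phi A W
  have hin : HasFDerivAt (fun X : Matrix (Fin d) (Fin r) ℝ => (X * Xᵀ - A, X * Xᵀ - A))
      ((phiD W).prod (phiD W)) W := HasFDerivAt.prodMk hΦ hΦ
  have h : HasFDerivAt
      (fun X : Matrix (Fin d) (Fin r) ℝ => toCLM2 (ipBil (d := d)) (X * Xᵀ - A) (X * Xᵀ - A))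
      ((hbil.deriv (W * Wᵀ - A, W * Wᵀ - A)).comp ((phiD W).prod (phiD W))) W :=
    HasFDerivAt.comp (g := fun p : Matrix (Fin d) (Fin d) ℝ × Matrix (Fin d) (Fin d) ℝ =>
        toCLM2 (ipBil (d := d)) p.1 p.2)
      (f := fun X : Matrix (Fin d) (Fin r) ℝ => (X * Xᵀ - A, X * Xᵀ - A)) W
      (hbil.hasFDerivAt (W * Wᵀ - A, W * Wᵀ - A)) hin
  have hfun : (fun X : Matrix (Fin d) (Fin r) ℝ => frobSq (X * Xᵀ - A)) =
      (fun X : Matrix (Fin d) (Fin r) ℝ =>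
        toCLM2 (ipBil (d := d)) (X * Xᵀ - A) (X * Xᵀ - A)) := by
    funext X; rw [frobSq_eq_ip]; simp only [toCLM2_apply]; rfl
  rw [hfun]
  refine h.congr_fderiv ?_
  ext Z
  change toCLM2 ipBil (W * Wᵀ - A) (phiD W Z) + toCLM2 ipBil (phiD W Z) (W * Wᵀ - A) = gradD A W Z
  simp only [ContinuousLinearMap.coe_comp', Function.comp_apply,
    ContinuousLinearMap.prod_apply, hbil.deriv_apply, toCLM2_apply, gradD, cBil_apply,
    phiD_apply]
  simp only [ipBil, LinearMap.mk₂_apply, ip_add_left, ip_add_right, ip_sub_left,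
    ip_sub_right]

instance : NormedAddCommGroup (Matrix (Fin d) (Fin r) ℝ →L[ℝ] ℝ) :=
  ContinuousLinearMap.toNormedAddCommGroup

instance : NormedSpace ℝ (Matrix (Fin d) (Fin r) ℝ →L[ℝ] ℝ) :=
  ContinuousLinearMap.toNormedSpace

/-- Second derivative of `f` at `U`. -/
def hessD (A : Matrix (Fin d) (Fin d) ℝ) (U : Matrix (Fin d) (Fin r) ℝ) :
    Matrix (Fin d) (Fin r) ℝ →L[ℝ] Matrix (Fin d) (Fin r) ℝ →L[ℝ] ℝ :=
  ((toCLM2 (cBil (d := d) (r := r))).isBoundedBilinearMap.deriv (U * Uᵀ - A, U)).comp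
    ((phiD U).prod (ContinuousLinearMap.id ℝ _))

lemma hasFDerivAt_grad (A : Matrix (Fin d) (Fin d) ℝ) (U : Matrix (Fin d) (Fin r) ℝ) :
    HasFDerivAt (fun W : Matrix (Fin d) (Fin r) ℝ => gradD A W) (hessD A U) U := by
  have hbil := (toCLM2 (cBil (d := d) (r := r))).isBoundedBilinearMap
  have hin : HasFDerivAt (fun W : Matrix (Fin d) (Fin r) ℝ => (W * Wᵀ - A, W))
      ((phiD U).prod (ContinuousLinearMap.id ℝ _)) U :=
    HasFDerivAt.prodMk (hasFDerivAt_phi A U) (hasFDerivAt_id U)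
  have h : HasFDerivAt
      (fun W : Matrix (Fin d) (Fin r) ℝ => toCLM2 (cBil (d := d) (r := r)) (W * Wᵀ - A) W)
      (hessD A U) U :=
    HasFDerivAt.comp (g := fun p : Matrix (Fin d) (Fin d) ℝ × Matrix (Fin d) (Fin r) ℝ =>
        toCLM2 (cBil (d := d) (r := r)) p.1 p.2)
      (f := fun W : Matrix (Fin d) (Fin r) ℝ => (W * Wᵀ - A, W)) U
      (hbil.hasFDerivAt (U * Uᵀ - A, U)) hin
  exact h

lemma hessD_apply (A : Matrix (Fin d) (Fin d) ℝ) (U Z : Matrix (Fin d) (Fin r) ℝ) :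
    hessD A U Z Z =
      (ip (U * Uᵀ - A) (Z * Zᵀ + Z * Zᵀ) + ip (Z * Zᵀ + Z * Zᵀ) (U * Uᵀ - A)) +
      (ip (U * Zᵀ + Z * Uᵀ) (U * Zᵀ + Z * Uᵀ) + ip (U * Zᵀ + Z * Uᵀ) (U * Zᵀ + Z * Uᵀ)) := by
  have hbil := (toCLM2 (cBil (d := d) (r := r))).isBoundedBilinearMap
  simp only [hessD, ContinuousLinearMap.coe_comp', Function.comp_apply,
    ContinuousLinearMap.prod_apply, ContinuousLinearMap.coe_id', id_eq,
    hbil.deriv_apply, ContinuousLinearMap.add_apply, toCLM2_apply, cBil_apply, phiD_apply]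
  rfl

/-- The algebraic core. -/
theorem core {d r : ℕ} (μ : Fin d → ℝ) (hμ0 : ∀ i, 0 ≤ μ i)
    (hgap : ∀ i j : Fin d, (i : ℕ) < r → r ≤ (j : ℕ) → 15 * μ j ≤ μ i)
    (V : Matrix (Fin d) (Fin r) ℝ)
    (hfirst : (V * Vᵀ - Matrix.diagonal μ) * V = 0)
    (hsecond : ∀ (v : Fin d → ℝ) (w : Fin r → ℝ), Vᵀ *ᵥ v = 0 →
      (v ⬝ᵥ (Matrix.diagonal μ *ᵥ v)) * (w ⬝ᵥ w) ≤ ((V *ᵥ w) ⬝ᵥ (V *ᵥ w)) * (v ⬝ᵥ v)) :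
    V * Vᵀ = Matrix.diagonal (fun i : Fin d => if (i : ℕ) < r then μ i else 0) := by
  classical
  -- basic matrix identities
  have h1 : (V * Vᵀ) * V = Matrix.diagonal μ * V := by
    have := sub_eq_zero.mpr (rfl : Matrix.diagonal μ * V = Matrix.diagonal μ * V)
    have h := hfirst
    rw [Matrix.sub_mul] at h
    exact sub_eq_zero.mp h
  have h2 : (V * Vᵀ) * (V * Vᵀ) = Matrix.diagonal μ * (V * Vᵀ) := by
    rw [← Matrix.mul_assoc, h1, Matrix.mul_assoc]
  have hYt : (V * Vᵀ)ᵀ = V * Vᵀ := by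
    rw [Matrix.transpose_mul, Matrix.transpose_transpose]
  have h3 : Matrix.diagonal μ * (V * Vᵀ) = (V * Vᵀ) * Matrix.diagonal μ := by
    have ht := congrArg Matrix.transpose h2
    simp only [Matrix.transpose_mul, Matrix.transpose_transpose,
      Matrix.diagonal_transpose] at ht
    rw [← h2]
    exact ht
  -- entrywise facts
  have hYe : ∀ k l : Fin d, (V * Vᵀ) k l = V k ⬝ᵥ V l := by
    intro k l
    simp [Matrix.mul_apply, Matrix.transpose_apply, dotProduct]
  have hsymE : ∀ k l : Fin d, (V * Vᵀ) k l = (V * Vᵀ) l k := by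
    intro k l
    rw [hYe, hYe, dotProduct_comm]
  have hYY : ∀ k i : Fin d, ∑ l, (V * Vᵀ) k l * (V * Vᵀ) l i = μ k * (V * Vᵀ) k i := by
    intro k i
    have h := congrFun (congrFun h2 k) i
    rw [Matrix.mul_apply] at h
    rw [h, Matrix.diagonal_mul]
  have hcommE : ∀ k l : Fin d, μ k * (V * Vᵀ) k l = (V * Vᵀ) k l * μ l := by
    intro k l
    have h := congrFun (congrFun h3 k) l
    rw [Matrix.diagonal_mul, Matrix.mul_diagonal] at h
    exact h
  have hrowsq : ∀ k : Fin d, ∑ l, (V * Vᵀ) k l * (V * Vᵀ) k l = μ k * (V * Vᵀ) k k := by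
    intro k
    rw [← hYY k k]
    apply Finset.sum_congr rfl; intro l _
    rw [hsymE l k]
  have hVk0 : ∀ k : Fin d, (V * Vᵀ) k k = 0 → V k = 0 := by
    intro k hk
    rw [hYe] at hk
    exact dotProduct_self_eq_zero.mp hk
  have hrow0 : ∀ k : Fin d, μ k * (V * Vᵀ) k k = 0 → V k = 0 := by
    intro k hk
    apply hVk0
    have hs := (hrowsq k).trans hk
    have := (Finset.sum_eq_zero_iff_of_nonneg
      (fun l _ => mul_self_nonneg ((V * Vᵀ) k l))).mp hs k (Finset.mem_univ k)
    exact mul_self_eq_zero.mp this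
  -- Claim I: columns with index < r
  have claimI : ∀ i : Fin d, (i : ℕ) < r →
      ∀ k : Fin d, (V * Vᵀ) k i = if k = i then μ i else 0 := by
    intro i hi
    rcases eq_or_lt_of_le (hμ0 i) with hz | hpos
    · -- zero eigenvalue: whole row/column vanishes
      intro k
      have hVi : V i = 0 := hrow0 i (by rw [← hz]; ring)
      rw [hYe, hVi, dotProduct_zero]
      split
      · exact hz
      · rfl
    · -- positive eigenvalue
      by_contra hne
      push_neg at hne
      obtain ⟨k₀, hk₀⟩ := hne
      have hμi : μ i ≠ 0 := ne_of_gt hpos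
      set v : Fin d → ℝ := fun k => (if k = i then (1:ℝ) else 0) - (μ i)⁻¹ * (V * Vᵀ) k i
        with hv
      have hcomm' : ∀ k, μ k * (V * Vᵀ) k i = μ i * (V * Vᵀ) k i := by
        intro k
        rw [hcommE k i]; ring
      have hYv : (V * Vᵀ) *ᵥ v = 0 := by
        funext k
        show (V * Vᵀ) k ⬝ᵥ v = 0
        rw [hv]
        simp only [dotProduct, mul_sub, Finset.sum_sub_distrib]
        have e1 : ∑ l, (V * Vᵀ) k l * (if l = i then (1:ℝ) else 0) = (V * Vᵀ) k i := by
          simp [mul_ite, Finset.sum_ite_eq']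
        have e2 : ∑ l, (V * Vᵀ) k l * ((μ i)⁻¹ * (V * Vᵀ) l i)
            = (μ i)⁻¹ * (μ k * (V * Vᵀ) k i) := by
          rw [← hYY k i, Finset.mul_sum]
          apply Finset.sum_congr rfl; intro l _
          ring
        rw [e1, e2, hcomm', ← mul_assoc, inv_mul_cancel₀ hμi, one_mul, sub_self]
      have hVtv : Vᵀ *ᵥ v = 0 := by
        apply dotProduct_self_eq_zero.mp
        have : (Vᵀ *ᵥ v) ⬝ᵥ (Vᵀ *ᵥ v) = v ⬝ᵥ ((V * Vᵀ) *ᵥ v) := by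
          rw [dotProduct_mulVec_left, Matrix.transpose_transpose, Matrix.mulVec_mulVec,
            dotProduct_comm]
        rw [this, hYv, dotProduct_zero]
      have hv0 : v ≠ 0 := by
        intro h0
        apply hk₀
        have hck := congrFun h0 k₀
        simp only [hv, Pi.zero_apply] at hck
        by_cases hki : k₀ = i
        · rw [if_pos hki] at hck ⊢
          have h4 : (μ i)⁻¹ * (V * Vᵀ) k₀ i = 1 := by linarith
          have h5 := congrArg (fun t => μ i * t) h4
          simp only [← mul_assoc, mul_inv_cancel₀ hμi, one_mul, mul_one] at h5
          exact h5
        · rw [if_neg hki] at hck ⊢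
          have h4 : (μ i)⁻¹ * (V * Vᵀ) k₀ i = 0 := by linarith
          rcases mul_eq_zero.mp h4 with h | h
          · exact absurd (inv_eq_zero.mp h) hμi
          · exact h
      have hvv : 0 < v ⬝ᵥ v := dot_self_pos hv0
      have hvDv : v ⬝ᵥ (Matrix.diagonal μ *ᵥ v) = μ i * (v ⬝ᵥ v) := by
        have hvD : ∀ k, μ k * v k = μ i * v k := by
          intro k
          rw [hv]
          by_cases hk : k = i
          · subst hk; rfl
          · simp only [hk, if_false, zero_sub, mul_neg, neg_inj]
            rw [← mul_assoc, ← mul_assoc, mul_comm (μ k) (μ i)⁻¹, mul_comm (μ i) (μ i)⁻¹,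
              mul_assoc, mul_assoc, hcomm' k]
        simp only [dotProduct, Matrix.mulVec_diagonal, Finset.mul_sum]
        apply Finset.sum_congr rfl; intro k _
        rw [hvD k]; ring
      have hposdef : ∀ w : Fin r → ℝ, μ i * (w ⬝ᵥ w) ≤ (V *ᵥ w) ⬝ᵥ (V *ᵥ w) := by
        intro w
        have hs := hsecond v w hVtv
        rw [hvDv] at hs
        have h5 : (μ i * (w ⬝ᵥ w)) * (v ⬝ᵥ v) ≤ ((V *ᵥ w) ⬝ᵥ (V *ᵥ w)) * (v ⬝ᵥ v) := by
          nlinarith [hs]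
        exact le_of_mul_le_mul_right h5 hvv
      have hVinj : Function.Injective V.mulVecLin := by
        intro x y hxy
        have hsub : V *ᵥ (x - y) = 0 := by
          rw [Matrix.mulVec_sub]
          rw [Matrix.mulVecLin_apply, Matrix.mulVecLin_apply] at hxy
          rw [hxy, sub_self]
        have h6 := hposdef (x - y)
        rw [hsub, dotProduct_zero] at h6
        have h7 : (x - y) ⬝ᵥ (x - y) = 0 := by
          have := dot_self_nonneg (x - y)
          nlinarith
        have := dotProduct_self_eq_zero.mp h7
        exact sub_eq_zero.mp this
      have hrankV : V.rank = r := by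
        show Module.finrank ℝ (LinearMap.range V.mulVecLin) = r
        rw [LinearMap.finrank_range_of_inj hVinj, Module.finrank_fin_fun]
      have hspanrow : Module.finrank ℝ (Submodule.span ℝ (Set.range V)) = r := by
        have h := Matrix.rank_eq_finrank_span_row V; rw [hrankV] at h; exact h.symm
      set S : Finset (Fin d) := Finset.univ.filter (fun k => μ i ≤ μ k) with hS
      have hiS : i ∈ S := by simp [hS]
      have hSr : ∀ k ∈ S, (k : ℕ) < r := by
        intro k hk
        rw [hS, Finset.mem_filter] at hk
        by_contra hkr
        push_neg at hkr
        have := hgap i k hi hkr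
        linarith [hk.2]
      have hrows0 : ∀ k : Fin d, k ∉ S → V k = 0 := by
        intro k hk
        rw [hS, Finset.mem_filter] at hk
        push_neg at hk
        have hki : μ k < μ i := hk (Finset.mem_univ k)
        rcases eq_or_lt_of_le (hμ0 k) with hz | hposk
        · exact hrow0 k (by rw [← hz]; ring)
        · -- 0 < μ k < μ i : use the spectral bound
          by_contra hVk
          have hkk : (V * Vᵀ) k k ≠ 0 := by
            rw [hYe]
            exact fun h => hVk (dotProduct_self_eq_zero.mp h)
          set w' : Fin d → ℝ := fun l => (V * Vᵀ) l k with hw'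
          have hw'0 : w' ≠ 0 := by
            intro h
            exact hkk (by simpa [hw'] using congrFun h k)
          have hYw' : (V * Vᵀ) *ᵥ w' = μ k • w' := by
            funext l
            show (V * Vᵀ) l ⬝ᵥ w' = _
            rw [hw']
            show ∑ m, (V * Vᵀ) l m * (V * Vᵀ) m k = _
            rw [hYY l k]
            simp only [Pi.smul_apply, smul_eq_mul]
            rw [hcommE l k]; ring
          have hVz : V *ᵥ (Vᵀ *ᵥ w') = μ k • w' := by
            rw [Matrix.mulVec_mulVec, hYw']
          have hzz : (Vᵀ *ᵥ w') ⬝ᵥ (Vᵀ *ᵥ w') = μ k * (w' ⬝ᵥ w') := by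
            rw [dotProduct_mulVec_left, Matrix.transpose_transpose, hVz,
              dotProduct_smul, smul_eq_mul, dotProduct_comm]
          have hVzVz : (V *ᵥ (Vᵀ *ᵥ w')) ⬝ᵥ (V *ᵥ (Vᵀ *ᵥ w')) = μ k ^ 2 * (w' ⬝ᵥ w') := by
            rw [hVz, smul_dotProduct, dotProduct_smul]
            simp [smul_eq_mul]; ring
          have hsp := hposdef (Vᵀ *ᵥ w')
          rw [hzz, hVzVz] at hsp
          have hwpos : 0 < w' ⬝ᵥ w' := dot_self_pos hw'0
          have h9 : μ k * (μ k * (w' ⬝ᵥ w')) < μ i * (μ k * (w' ⬝ᵥ w')) :=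
            mul_lt_mul_of_pos_right hki (mul_pos hposk hwpos)
          nlinarith [h9, hsp]
      -- linear independence of the rows indexed by S
      have hspan_eq : Submodule.span ℝ (V '' ↑S) = Submodule.span ℝ (Set.range V) := by
        apply le_antisymm
        · exact Submodule.span_mono (Set.image_subset_range _ _)
        · rw [Submodule.span_le]
          rintro _ ⟨k, rfl⟩
          by_cases hk : k ∈ S
          · exact Submodule.subset_span (Set.mem_image_of_mem _ (by simpa using hk))
          · rw [hrows0 k hk]
            exact Submodule.zero_mem _
      have hrange : Set.range (fun k : {x // x ∈ S} => V ↑k) = V '' ↑S := by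
        ext y
        constructor
        · rintro ⟨⟨k, hk⟩, rfl⟩
          exact ⟨k, by simpa using hk, rfl⟩
        · rintro ⟨k, hk, rfl⟩
          exact ⟨⟨k, by simpa using hk⟩, rfl⟩
      have hfinb : (Set.range (fun k : {x // x ∈ S} => V ↑k)).finrank ℝ = r := by
        rw [Set.finrank, hrange, hspan_eq, hspanrow]
      have hcardS : Fintype.card {x // x ∈ S} = r := by
        rw [Fintype.card_coe]
        have hle : S.card ≤ r := by
          have hrpos : 0 < r := Nat.pos_of_ne_zero (by omega)
          have := Finset.card_le_card_of_injOn
            (f := fun k : Fin d => if h : (k : ℕ) < r then (⟨(k : ℕ), h⟩ : Fin r)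
              else ⟨0, hrpos⟩)
            (fun k hk => Finset.mem_univ _)
            (by
              intro a ha b hb hab
              simp only at hab
              rw [dif_pos (hSr a (Finset.mem_coe.mp ha)), dif_pos (hSr b (Finset.mem_coe.mp hb))] at hab
              have hval := congrArg Fin.val hab
              exact Fin.val_injective hval)
          simpa using this
        have hge : r ≤ S.card := by
          have h8 := finrank_range_le_card (R := ℝ) (fun k : {x // x ∈ S} => V ↑k)
          rw [hfinb, Fintype.card_coe] at h8
          exact h8
        omega
      have hLI : LinearIndependent ℝ (fun k : {x // x ∈ S} => V ↑k) :=
        linearIndependent_iff_card_eq_finrank_span.mpr (by rw [hcardS, hfinb])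
      -- the vector v gives a dependence relation
      have htot : ∑ k : Fin d, v k • V k = 0 := by
        funext j
        rw [Finset.sum_apply]
        have := congrFun hVtv j
        rw [Matrix.mulVec] at this
        simp only [Pi.zero_apply] at this ⊢
        rw [← this]
        simp only [dotProduct, Matrix.transpose_apply, Pi.smul_apply, smul_eq_mul]
        apply Finset.sum_congr rfl; intro k _
        ring
      have hsumS : ∑ k ∈ S, v k • V k = 0 := by
        rw [← htot]
        apply Finset.sum_subset (Finset.subset_univ S)
        intro k _ hk
        rw [hrows0 k hk, smul_zero]
      have hsumS' : ∑ k : {x // x ∈ S}, v ↑k • V ↑k = 0 := by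
        rw [Finset.univ_eq_attach, Finset.sum_attach S (fun k => v k • V k)]
        exact hsumS
      have hzero := Fintype.linearIndependent_iff.mp hLI (fun k => v ↑k) hsumS'
      apply hv0
      funext k
      by_cases hk : k ∈ S
      · exact hzero ⟨k, hk⟩
      · have hki : k ≠ i := fun h => hk (h ▸ hiS)
        have hVk : V k = 0 := hrows0 k hk
        rw [hv]
        simp only [hki, if_false, Pi.zero_apply, hYe, hVk, zero_dotProduct,
          mul_zero, zero_sub, neg_zero]
  -- Claim II: columns with index ≥ r vanish
  have claimII : ∀ j : Fin d, r ≤ (j : ℕ) → ∀ k : Fin d, (V * Vᵀ) k j = 0 := by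
    intro j hj k
    suffices hVj : V j = 0 by rw [hYe, hVj, dotProduct_zero]
    by_contra hVj
    have hjj : 0 < (V * Vᵀ) j j := by rw [hYe]; exact dot_self_pos hVj
    have hμj : 0 < μ j := by
      have hs := hrowsq j
      have hone : (V * Vᵀ) j j * (V * Vᵀ) j j ≤ ∑ l, (V * Vᵀ) j l * (V * Vᵀ) j l :=
        Finset.single_le_sum (f := fun l => (V * Vᵀ) j l * (V * Vᵀ) j l)
          (fun l _ => mul_self_nonneg _) (Finset.mem_univ j)
      rcases eq_or_lt_of_le (hμ0 j) with hz | h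
      · exfalso; rw [hs] at hone; nlinarith
      · exact h
    have hrd : r < d := lt_of_le_of_lt hj j.isLt
    set emb : Fin r → Fin d := fun k' => ⟨(k' : ℕ), lt_trans k'.isLt hrd⟩ with hemb
    have hembj : ∀ k', emb k' ≠ j := by
      intro k' h
      have : (k' : ℕ) = (j : ℕ) := congrArg Fin.val h
      omega
    have hembi : Function.Injective emb := by
      intro a b h
      have hval := congrArg Fin.val h
      exact Fin.val_injective hval
    have hμemb : ∀ k' : Fin r, 0 < μ (emb k') := by
      intro k'
      have := hgap (emb k') j (by simp [hemb]) hj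
      linarith
    have hcol : ∀ k' : Fin r, ∀ l : Fin d,
        (V * Vᵀ) l (emb k') = if l = emb k' then μ (emb k') else 0 :=
      fun k' => claimI (emb k') (by simp [hemb])
    set g : Option (Fin r) → (Fin r → ℝ) :=
      fun o => Option.elim o (V j) (fun k' => V (emb k')) with hg
    have h0 : ∀ o, g o ⬝ᵥ g o ≠ 0 := by
      intro o
      rcases o with _ | k'
      · simpa [hg] using fun h => hVj (dotProduct_self_eq_zero.mp h)
      · rw [hg]
        show V (emb k') ⬝ᵥ V (emb k') ≠ 0
        rw [← hYe, hcol k' (emb k')]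
        simp [ne_of_gt (hμemb k')]
    have horth : ∀ o o', o ≠ o' → g o ⬝ᵥ g o' = 0 := by
      intro o o' hoo
      rcases o with _ | k' <;> rcases o' with _ | k''
      · exact absurd rfl hoo
      · rw [hg]
        show V j ⬝ᵥ V (emb k'') = 0
        rw [← hYe, hcol k'' j]
        simp [(hembj k'').symm]
      · rw [hg]
        show V (emb k') ⬝ᵥ V j = 0
        rw [dotProduct_comm, ← hYe, hcol k' j]
        simp [(hembj k').symm]
      · have hkk : k' ≠ k'' := fun h => hoo (by rw [h])
        have hne : emb k' ≠ emb k'' := fun h => hkk (hembi h)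
        rw [hg]
        show V (emb k') ⬝ᵥ V (emb k'') = 0
        rw [← hYe, hcol k'' (emb k')]
        simp [hne]
    have hLI := li_of_orthogonal g h0 horth
    have hcard := hLI.fintype_card_le_finrank
    rw [Module.finrank_fin_fun] at hcard
    simp [Fintype.card_option] at hcard
  -- conclude
  ext k l
  rw [Matrix.diagonal_apply]
  by_cases hl : (l : ℕ) < r
  · rw [claimI l hl k]
    by_cases hkl : k = l
    · subst hkl; simp [hl]
    · simp [hkl]
  · rw [claimII l (by omega) k]
    by_cases hkl : k = l
    · subst hkl; simp [hl]
    · simp [hkl]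

end Landscape

/-- Matrix factorization landscape lemma: let `A = P diag(μ) Pᵀ` be a PSD matrix with
eigenvalues sorted decreasingly and `σ_r(A) ≥ 15 σ_{r+1}(A)`, and let
`f(U) = ‖UUᵀ − A‖_F²`. Then every `U` with `∇f(U) = 0` and `∇²f(U) ⪰ 0` satisfies
`UUᵀ = P_r(A)`, the best rank-`r` approximation of `A`. -/
theorem stmt19 {d r : ℕ}
    (A : Matrix (Fin d) (Fin d) ℝ) (hA : A.PosSemidef)
    (P : Matrix (Fin d) (Fin d) ℝ) (hP : P ∈ Matrix.orthogonalGroup (Fin d) ℝ)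
    (μ : Fin d → ℝ) (hμ0 : ∀ i, 0 ≤ μ i)
    (hsorted : ∀ i j : Fin d, i ≤ j → μ j ≤ μ i)
    (hdecomp : A = P * Matrix.diagonal μ * Pᵀ)
    (hgap : ∀ i j : Fin d, (i : ℕ) < r → r ≤ (j : ℕ) → 15 * μ j ≤ μ i)
    (f : Matrix (Fin d) (Fin r) ℝ → ℝ)
    (hf : f = fun U => frobSq (U * Uᵀ - A))
    (U : Matrix (Fin d) (Fin r) ℝ)
    (hgrad : fderiv ℝ f U = 0)
    (hhess : ∀ Z : Matrix (Fin d) (Fin r) ℝ, 0 ≤ iteratedFDeriv ℝ 2 f U ![Z, Z]) :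
    U * Uᵀ = P * Matrix.diagonal (fun i : Fin d => if (i : ℕ) < r then μ i else 0) * Pᵀ := by
  subst hf
  -- orthogonality of P
  have hPtP : Pᵀ * P = 1 := by
    have h := hP
    rw [Matrix.mem_orthogonalGroup_iff'] at h
    simpa [Matrix.star_eq_conjTranspose] using h
  have hPPt : P * Pᵀ = 1 := by
    have h := hP
    rw [Matrix.mem_orthogonalGroup_iff] at h
    simpa [Matrix.star_eq_conjTranspose] using h
  have hAsym : Aᵀ = A := by
    rw [hdecomp, Matrix.transpose_mul, Matrix.transpose_mul, Matrix.transpose_transpose,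
      Matrix.diagonal_transpose, Matrix.mul_assoc]
  set M : Matrix (Fin d) (Fin d) ℝ := U * Uᵀ - A with hMdef
  have hMsym : Mᵀ = M := by
    rw [hMdef, Matrix.transpose_sub, Matrix.transpose_mul, Matrix.transpose_transpose,
      hAsym]
  -- first-order condition
  have hgradU : Landscape.gradD A U = 0 := by
    have h := (Landscape.hasFDerivAt_f A U).fderiv
    rw [hgrad] at h; exact h.symm
  have hfirstU : M * U = 0 := by
    set Z₀ : Matrix (Fin d) (Fin r) ℝ := M * U with hZ₀
    have happ : Landscape.gradD A U Z₀ = 0 := by rw [hgradU]; rfl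
    rw [Landscape.gradD, Landscape.cBil_apply] at happ
    rw [ip_add_right, ip_add_left, ip_transpose_mul_right, ip_mul_transpose_right] at happ
    rw [ip_comm (U * Z₀ᵀ) M, ip_comm (Z₀ * Uᵀ) M,
      ip_transpose_mul_right, ip_mul_transpose_right, hMsym] at happ
    have h4 : (4 : ℝ) * ip (M * U) Z₀ = 0 := by linarith
    have h0 : ip Z₀ Z₀ = 0 := by
      have := mul_eq_zero.mp h4
      rcases this with h | h
      · norm_num at h
      · simpa [hZ₀] using h
    exact eq_zero_of_ip_self _ h0
  -- second-order condition
  have hhessI : ∀ Z : Matrix (Fin d) (Fin r) ℝ,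
      0 ≤ ip (U * Zᵀ + Z * Uᵀ) (U * Zᵀ + Z * Uᵀ) + 2 * ip M (Z * Zᵀ) := by
    intro Z
    have h2 := hhess Z
    rw [iteratedFDeriv_two_apply] at h2
    have hff : fderiv ℝ (fun X : Matrix (Fin d) (Fin r) ℝ => frobSq (X * Xᵀ - A)) =
        fun W => Landscape.gradD A W :=
      funext fun W => (Landscape.hasFDerivAt_f A W).fderiv
    erw [hff, (Landscape.hasFDerivAt_grad A U).fderiv] at h2
    simp only [Matrix.cons_val_zero, Matrix.cons_val_one, Matrix.head_cons] at h2
    erw [Landscape.hessD_apply] at h2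
    have e1 : ip (U * Uᵀ - A) (Z * Zᵀ + Z * Zᵀ) = 2 * ip M (Z * Zᵀ) := by
      rw [ip_add_right, hMdef]; ring
    have e2 : ip (Z * Zᵀ + Z * Zᵀ) (U * Uᵀ - A) = 2 * ip M (Z * Zᵀ) := by
      rw [ip_comm, ip_add_right, hMdef]; ring
    rw [e1, e2] at h2
    linarith
  -- change of basis
  set V : Matrix (Fin d) (Fin r) ℝ := Pᵀ * U with hVdef
  have hUV : P * V = U := by rw [hVdef, ← Matrix.mul_assoc, hPPt, Matrix.one_mul]
  have hVt : Vᵀ = Uᵀ * P := by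
    rw [hVdef, Matrix.transpose_mul, Matrix.transpose_transpose]
  have hPMP : V * Vᵀ - Matrix.diagonal μ = Pᵀ * M * P := by
    rw [hMdef, Matrix.mul_sub, Matrix.sub_mul, hdecomp]
    congr 1
    · rw [hVt, hVdef]
      simp only [Matrix.mul_assoc]
    · rw [← Matrix.mul_assoc, ← Matrix.mul_assoc, hPtP, Matrix.one_mul,
        Matrix.mul_assoc, hPtP, Matrix.mul_one]
  have hfirstV : (V * Vᵀ - Matrix.diagonal μ) * V = 0 := by
    rw [hPMP, hVdef, Matrix.mul_assoc (Pᵀ * M) P (Pᵀ * U), ← Matrix.mul_assoc P Pᵀ U,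
      hPPt, Matrix.one_mul, Matrix.mul_assoc, hfirstU, Matrix.mul_zero]
  have hVtV : Vᵀ * V = Uᵀ * U := by
    rw [hVt, hVdef, Matrix.mul_assoc, ← Matrix.mul_assoc P Pᵀ U, hPPt, Matrix.one_mul]
  have hsecondV : ∀ (v : Fin d → ℝ) (w : Fin r → ℝ), Vᵀ *ᵥ v = 0 →
      (v ⬝ᵥ (Matrix.diagonal μ *ᵥ v)) * (w ⬝ᵥ w) ≤
        ((V *ᵥ w) ⬝ᵥ (V *ᵥ w)) * (v ⬝ᵥ v) := by
    intro v w hv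
    set u : Fin d → ℝ := P *ᵥ v with hu
    have hUtu : Uᵀ *ᵥ u = 0 := by
      rw [hu, Matrix.mulVec_mulVec, ← hVt]; exact hv
    have hPtu : Pᵀ *ᵥ u = v := by
      rw [hu, Matrix.mulVec_mulVec, hPtP, Matrix.one_mulVec]
    have hxu : (U *ᵥ w) ⬝ᵥ u = 0 := by
      rw [dotProduct_mulVec_left, hUtu, dotProduct_zero]
    have hux : u ⬝ᵥ (U *ᵥ w) = 0 := by rw [dotProduct_comm]; exact hxu
    have huu : u ⬝ᵥ u = v ⬝ᵥ v := by
      conv_lhs => rw [hu]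
      rw [dotProduct_mulVec_left, hPtu]
    have hxx : (U *ᵥ w) ⬝ᵥ (U *ᵥ w) = (V *ᵥ w) ⬝ᵥ (V *ᵥ w) := by
      rw [dotProduct_mulVec_left, Matrix.mulVec_mulVec,
        dotProduct_mulVec_left (M := V), Matrix.mulVec_mulVec, hVtV]
    have hMu : u ⬝ᵥ (M *ᵥ u) = -(v ⬝ᵥ (Matrix.diagonal μ *ᵥ v)) := by
      rw [hMdef, Matrix.sub_mulVec, dotProduct_sub]
      have h1 : u ⬝ᵥ ((U * Uᵀ) *ᵥ u) = 0 := by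
        rw [← Matrix.mulVec_mulVec, hUtu, Matrix.mulVec_zero, dotProduct_zero]
      have h2 : u ⬝ᵥ (A *ᵥ u) = v ⬝ᵥ (Matrix.diagonal μ *ᵥ v) := by
        rw [hdecomp, ← Matrix.mulVec_mulVec, ← Matrix.mulVec_mulVec,
          dotProduct_comm, dotProduct_mulVec_left, hPtu, dotProduct_comm]
      rw [h1, h2, zero_sub]
    have hZ := hhessI (Matrix.vecMulVec u w)
    rw [vecMulVec_transpose'] at hZ
    rw [Landscape.mul_vecMulVec] at hZ
    rw [Landscape.vecMulVec_mul u w Uᵀ] at hZ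
    rw [Matrix.vecMul_transpose] at hZ
    rw [Landscape.vecMulVec_mul u w (Matrix.vecMulVec w u)] at hZ
    rw [Landscape.vecMul_vecMulVec] at hZ
    rw [vecMulVec_smul_right] at hZ
    rw [ip_smul_right] at hZ
    rw [ip_add_left, ip_add_right, ip_add_right] at hZ
    rw [ip_vecMulVec, ip_vecMulVec, ip_vecMulVec, ip_vecMulVec, ip_vecMulVec_right] at hZ
    rw [hxu, hux, huu, hxx, hMu] at hZ
    nlinarith [hZ]
  have hcore := Landscape.core μ hμ0 hgap V hfirstV hsecondV
  have hstep : (P * V) * (P * V)ᵀ = P * (V * Vᵀ) * Pᵀ := by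
    rw [Matrix.transpose_mul]; simp only [Matrix.mul_assoc]
  rw [← hUV, hstep, hcore]
end
end
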